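/- arXiv:2008.07077 — 3 statements merged into one kernel-verified Lean document; each statement's English description precedes it below -/
import Mathlib

section
/- Let α > 0, let (π_k)_{k≥1} be GEM(α) stick-breaking weights built from an i.i.d. sequence of Beta(1,α) random variables, and let (X_k)_{k≥1} be a sequence of random elements of a measurable space E, independent of the stick sequence, such that all the X_k are identically distributed and, for every pair of distinct indices k1 ≠ k2, the pair (X_{k1}, X_{k2}) has the same joint distribution as (X_1, X_2). Then for all measurable functions f1, f2 : E → [0,∞], E[∑_{k1≥1} ∑_{k2≥1} π_{k1} π_{k2} f1(X_{k1}) f2(X_{k2})] = q1 · E[f1(X_1) f2(X_1)] + (1 − q1) · E[f1(X_1) f2(X_2)], where q1 = 1/(1+α). (This is the mixed-moment identity of Proposition 1, with E playing the role of the space of probability measures and X_k the role of the component distributions G*_k.) -/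
open MeasureTheory ProbabilityTheory
open scoped ENNReal

/-- The Beta(1, γ) distribution on [0,1]: density `x ↦ γ (1-x)^(γ-1)` w.r.t. Lebesgue
measure on `[0,1]`. -/
noncomputable def betaOne (γ : ℝ) : Measure ℝ :=
  (volume.restrict (Set.Icc (0:ℝ) 1)).withDensity
    fun x => ENNReal.ofReal (γ * (1 - x) ^ (γ - 1))

/-- Stick-breaking weights (0-indexed): `stick V k = V k * ∏_{i<k} (1 - V i)`. -/
noncomputable def stick {Ω : Type*} (V : ℕ → Ω → ℝ) (k : ℕ) (x : Ω) : ℝ :=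
  V k x * ∏ i ∈ Finset.range k, (1 - V i x)

lemma integral_one_sub_rpow {r : ℝ} (hr : -1 < r) :
    ∫ v in (0:ℝ)..1, (1 - v) ^ r = 1 / (r + 1) := by
  have h := intervalIntegral.integral_comp_sub_left (a := 0) (b := 1) (fun u : ℝ => u ^ r) 1
  norm_num at h
  rw [h, integral_rpow (Or.inl hr), Real.one_rpow, Real.zero_rpow (by linarith)]
  ring

lemma intInt_one_sub_rpow {r : ℝ} (hr : -1 < r) :
    IntervalIntegrable (fun v : ℝ => (1 - v) ^ r) volume 0 1 := by
  have h := (intervalIntegral.intervalIntegrable_rpow' (a := 0) (b := 1) hr).comp_sub_left 1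
  norm_num at h
  exact h.symm

lemma rpow_helper {u : ℝ} (hu : 0 ≤ u) {α : ℝ} (hα : 0 < α) (m : ℕ) :
    u ^ (α - 1) * u ^ m = u ^ (α - 1 + m) := by
  rcases eq_or_lt_of_le hu with h | h
  · rw [← h]
    cases m with
    | zero => norm_num
    | succ n =>
        rw [Real.zero_rpow (by push_cast; linarith : α - 1 + (n+1:ℕ) ≠ 0)]
        simp [pow_succ]
  · rw [← Real.rpow_natCast u m, ← Real.rpow_add h]

lemma betaOne_lintegral {α : ℝ} (hα : 0 < α) {g G : ℝ → ℝ} (hmg : Measurable g)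
    (hg0 : ∀ v ∈ Set.Icc (0:ℝ) 1, 0 ≤ g v)
    (hGeq : ∀ v ∈ Set.Icc (0:ℝ) 1, α * (1 - v) ^ (α - 1) * g v = G v)
    (hGint : IntervalIntegrable G volume 0 1) :
    ∫⁻ v, ENNReal.ofReal (g v) ∂(betaOne α) = ENNReal.ofReal (∫ v in (0:ℝ)..1, G v) := by
  have hmd : Measurable fun v : ℝ => ENNReal.ofReal (α * (1 - v) ^ (α - 1)) := by fun_prop
  have hae : (fun v => ENNReal.ofReal (α * (1 - v) ^ (α - 1)) * ENNReal.ofReal (g v))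
      =ᵐ[volume.restrict (Set.Icc (0:ℝ) 1)] fun v => ENNReal.ofReal (G v) := by
    refine (ae_restrict_iff' measurableSet_Icc).2 (ae_of_all _ fun v hv => ?_)
    have h1 : (0:ℝ) ≤ 1 - v := by linarith [hv.2]
    dsimp only
    rw [← ENNReal.ofReal_mul (mul_nonneg hα.le (Real.rpow_nonneg h1 _)), hGeq v hv]
  have hnn : 0 ≤ᵐ[volume.restrict (Set.Icc (0:ℝ) 1)] G := by
    refine (ae_restrict_iff' measurableSet_Icc).2 (ae_of_all _ fun v hv => ?_)
    rw [← hGeq v hv]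
    have h1 : (0:ℝ) ≤ 1 - v := by linarith [hv.2]
    exact mul_nonneg (mul_nonneg hα.le (Real.rpow_nonneg h1 _)) (hg0 v hv)
  have hint : IntegrableOn G (Set.Icc (0:ℝ) 1) volume :=
    (intervalIntegrable_iff_integrableOn_Icc_of_le zero_le_one).1 hGint
  rw [betaOne, lintegral_withDensity_eq_lintegral_mul _ hmd hmg.ennreal_ofReal]
  simp only [Pi.mul_apply]
  rw [lintegral_congr_ae hae, ← ofReal_integral_eq_lintegral_ofReal hint hnn,
    integral_Icc_eq_integral_Ioc, ← intervalIntegral.integral_of_le zero_le_one]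

section moments
variable {α : ℝ}

lemma e1 (hα : 0 < α) (u : ℝ) (h1 : 0 ≤ u) : u ^ (α-1) * u = u ^ α :=
  calc u ^ (α-1) * u = u ^ (α-1) * u ^ (1:ℕ) := by rw [pow_one]
  _ = u ^ (α-1+(1:ℕ)) := rpow_helper h1 hα 1
  _ = u ^ α := by rw [show α-1+((1:ℕ):ℝ) = α by push_cast; ring]

lemma e2 (hα : 0 < α) (u : ℝ) (h1 : 0 ≤ u) : u ^ (α-1) * u ^ (2:ℕ) = u ^ (α+1) :=
  calc u ^ (α-1) * u ^ (2:ℕ) = u ^ (α-1+(2:ℕ)) := rpow_helper h1 hα 2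
  _ = u ^ (α+1) := by rw [show α-1+((2:ℕ):ℝ) = α+1 by push_cast; ring]

lemma b0 (hα : 0 < α) : ∫ v in (0:ℝ)..1, (1-v) ^ (α-1) = 1/α := by
  rw [integral_one_sub_rpow (by linarith)]; ring_nf

lemma b1 (hα : 0 < α) : ∫ v in (0:ℝ)..1, (1-v) ^ α = 1/(α+1) := by
  rw [integral_one_sub_rpow (by linarith)]

lemma b2 (hα : 0 < α) : ∫ v in (0:ℝ)..1, (1-v) ^ (α+1) = 1/(α+2) := by
  rw [integral_one_sub_rpow (by linarith)]; ring_nf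

lemma i0 (hα : 0 < α) : IntervalIntegrable (fun v : ℝ => (1-v) ^ (α-1)) volume 0 1 :=
  intInt_one_sub_rpow (by linarith)
lemma i1 (hα : 0 < α) : IntervalIntegrable (fun v : ℝ => (1-v) ^ α) volume 0 1 :=
  intInt_one_sub_rpow (by linarith)
lemma i2 (hα : 0 < α) : IntervalIntegrable (fun v : ℝ => (1-v) ^ (α+1)) volume 0 1 :=
  intInt_one_sub_rpow (by linarith)

lemma moment_v (hα : 0 < α) :
    ∫⁻ v, ENNReal.ofReal v ∂(betaOne α) = ENNReal.ofReal (1/(1+α)) := by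
  have key := betaOne_lintegral hα (g := fun v => v)
      (G := fun v => α * ((1-v)^(α-1) - (1-v)^α)) (by fun_prop) (fun v hv => hv.1)
      (fun v hv => by
        have h1 : (0:ℝ) ≤ 1 - v := by linarith [hv.2]
        rw [← e1 hα (1-v) h1]; ring)
      (((i0 hα).sub (i1 hα)).const_mul α)
  rw [key]
  rw [intervalIntegral.integral_const_mul,
    intervalIntegral.integral_sub (i0 hα) (i1 hα), b0 hα, b1 hα]
  refine congrArg ENNReal.ofReal ?_
  have h0 : α ≠ 0 := ne_of_gt hα
  have ha1 : α + 1 ≠ 0 := by linarith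
  have ha2 : α + 2 ≠ 0 := by linarith
  have hb1 : 1 + α ≠ 0 := by linarith
  have hb2 : 2 + α ≠ 0 := by linarith
  field_simp
  all_goals first | ring1 | (left; first | ring1 | trivial)

lemma moment_1mv (hα : 0 < α) :
    ∫⁻ v, ENNReal.ofReal (1-v) ∂(betaOne α) = ENNReal.ofReal (α/(1+α)) := by
  have key := betaOne_lintegral hα (g := fun v => 1-v)
      (G := fun v => α * (1-v)^α) (by fun_prop) (fun v hv => by show (0:ℝ) ≤ 1 - v; linarith [hv.2])
      (fun v hv => by
        have h1 : (0:ℝ) ≤ 1 - v := by linarith [hv.2]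
        rw [← e1 hα (1-v) h1]; ring)
      ((i1 hα).const_mul α)
  rw [key]
  rw [intervalIntegral.integral_const_mul, b1 hα]
  refine congrArg ENNReal.ofReal ?_
  have h0 : α ≠ 0 := ne_of_gt hα
  have ha1 : α + 1 ≠ 0 := by linarith
  have ha2 : α + 2 ≠ 0 := by linarith
  have hb1 : 1 + α ≠ 0 := by linarith
  have hb2 : 2 + α ≠ 0 := by linarith
  field_simp
  all_goals first | ring1 | (left; first | ring1 | trivial)

lemma moment_vsq (hα : 0 < α) :
    ∫⁻ v, ENNReal.ofReal (v^(2:ℕ)) ∂(betaOne α) = ENNReal.ofReal (2/((1+α)*(2+α))) := by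
  have key := betaOne_lintegral hα (g := fun v => v^(2:ℕ))
      (G := fun v => α * ((1-v)^(α-1) - 2*(1-v)^α + (1-v)^(α+1))) (by fun_prop)
      (fun v hv => by positivity)
      (fun v hv => by
        have h1 : (0:ℝ) ≤ 1 - v := by linarith [hv.2]
        rw [← e1 hα (1-v) h1, ← e2 hα (1-v) h1]; ring)
      ((((i0 hα).sub ((i1 hα).const_mul 2)).add (i2 hα)).const_mul α)
  rw [key]
  rw [intervalIntegral.integral_const_mul,
    intervalIntegral.integral_add ((i0 hα).sub ((i1 hα).const_mul 2)) (i2 hα),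
    intervalIntegral.integral_sub (i0 hα) ((i1 hα).const_mul 2),
    intervalIntegral.integral_const_mul, b0 hα, b1 hα, b2 hα]
  refine congrArg ENNReal.ofReal ?_
  have h0 : α ≠ 0 := ne_of_gt hα
  have ha1 : α + 1 ≠ 0 := by linarith
  have ha2 : α + 2 ≠ 0 := by linarith
  have hb1 : 1 + α ≠ 0 := by linarith
  have hb2 : 2 + α ≠ 0 := by linarith
  field_simp
  all_goals first | ring1 | (left; first | ring1 | trivial)

lemma moment_1mvsq (hα : 0 < α) :
    ∫⁻ v, ENNReal.ofReal ((1-v)^(2:ℕ)) ∂(betaOne α) = ENNReal.ofReal (α/(2+α)) := by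
  have key := betaOne_lintegral hα (g := fun v => (1-v)^(2:ℕ))
      (G := fun v => α * (1-v)^(α+1)) (by fun_prop)
      (fun v hv => by positivity)
      (fun v hv => by
        have h1 : (0:ℝ) ≤ 1 - v := by linarith [hv.2]
        rw [← e2 hα (1-v) h1]; ring)
      ((i2 hα).const_mul α)
  rw [key]
  rw [intervalIntegral.integral_const_mul, b2 hα]
  refine congrArg ENNReal.ofReal ?_
  have h0 : α ≠ 0 := ne_of_gt hα
  have ha1 : α + 1 ≠ 0 := by linarith
  have ha2 : α + 2 ≠ 0 := by linarith
  have hb1 : 1 + α ≠ 0 := by linarith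
  have hb2 : 2 + α ≠ 0 := by linarith
  field_simp
  all_goals first | ring1 | (left; first | ring1 | trivial)

lemma moment_v1mv (hα : 0 < α) :
    ∫⁻ v, ENNReal.ofReal (v*(1-v)) ∂(betaOne α) = ENNReal.ofReal (α/((1+α)*(2+α))) := by
  have key := betaOne_lintegral hα (g := fun v => v*(1-v))
      (G := fun v => α * ((1-v)^α - (1-v)^(α+1))) (by fun_prop)
      (fun v hv => mul_nonneg hv.1 (by linarith [hv.2]))
      (fun v hv => by
        have h1 : (0:ℝ) ≤ 1 - v := by linarith [hv.2]
        rw [← e1 hα (1-v) h1, ← e2 hα (1-v) h1]; ring)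
      (((i1 hα).sub (i2 hα)).const_mul α)
  rw [key]
  rw [intervalIntegral.integral_const_mul,
    intervalIntegral.integral_sub (i1 hα) (i2 hα), b1 hα, b2 hα]
  refine congrArg ENNReal.ofReal ?_
  have h0 : α ≠ 0 := ne_of_gt hα
  have ha1 : α + 1 ≠ 0 := by linarith
  have ha2 : α + 2 ≠ 0 := by linarith
  have hb1 : 1 + α ≠ 0 := by linarith
  have hb2 : 2 + α ≠ 0 := by linarith
  field_simp
  all_goals first | ring1 | (left; first | ring1 | trivial)

end moments

section indep
variable {Ω : Type*} [MeasurableSpace Ω] {μ : Measure Ω} [IsProbabilityMeasure μ]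

lemma lint_prod (V : ℕ → Ω → ℝ) (hmV : ∀ k, Measurable (V k))
    (hindepV : iIndepFun V μ)
    (φ : ℕ → ℝ → ℝ≥0∞) (hφ : ∀ i, Measurable (φ i)) (s : Finset ℕ) :
    ∫⁻ x, ∏ i ∈ s, φ i (V i x) ∂μ = ∏ i ∈ s, ∫⁻ x, φ i (V i x) ∂μ := by
  classical
  induction s using Finset.induction_on with
  | empty => simp
  | @insert a s ha ih =>
    simp only [Finset.prod_insert ha]
    have hm1 : Measurable fun v : (↥({a} : Finset ℕ) → ℝ) => φ a (v ⟨a, Finset.mem_singleton_self a⟩) :=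
      (hφ a).comp (measurable_pi_apply _)
    have hm2 : Measurable fun v : (↥s → ℝ) => ∏ i ∈ s.attach, φ i (v i) :=
      s.attach.measurable_prod fun i _ => (hφ i).comp (measurable_pi_apply i)
    have h := (hindepV.indepFun_finset {a} s (Finset.disjoint_singleton_left.2 ha) hmV).comp hm1 hm2
    have hind : IndepFun (fun x => φ a (V a x)) (fun x => ∏ i ∈ s, φ i (V i x)) μ := by
      convert h using 1
      · rfl
      funext x
      exact (Finset.prod_attach s fun i => φ i (V i x)).symm
    rw [lintegral_mul_eq_lintegral_mul_lintegral_of_indepFun''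
      (f := fun x => φ a (V a x)) (g := fun x => ∏ i ∈ s, φ i (V i x))
      ((hφ a).comp (hmV a)).aemeasurable
      (s.measurable_prod fun i _ => (hφ i).comp (hmV i)).aemeasurable hind, ih]

end indep

section series
open scoped ENNReal

lemma ennreal_tsum_split (f : ℕ → ℝ≥0∞) (n : ℕ) :
    ∑' k, f k = (∑ k ∈ Finset.range n, f k) + ∑' d, f (n + d) := by
  have h : ∀ k : ℕ, f k = (if k < n then f k else 0) + (if n ≤ k then f k else 0) := by
    intro k
    by_cases hk : k < n
    · simp [hk, Nat.not_le.2 hk]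
    · simp [hk, Nat.le_of_not_lt hk]
  calc ∑' k, f k = ∑' k, ((if k < n then f k else 0) + (if n ≤ k then f k else 0)) :=
        tsum_congr h
    _ = (∑' k, if k < n then f k else 0) + ∑' k, if n ≤ k then f k else 0 :=
        ENNReal.tsum_add
    _ = (∑ k ∈ Finset.range n, f k) + ∑' d, f (n + d) := by
        congr 1
        · rw [tsum_eq_sum (s := Finset.range n)
            (fun b hb => if_neg (by simpa using hb))]
          exact Finset.sum_congr rfl fun k hk => if_pos (Finset.mem_range.mp hk)
        · rw [← Function.Injective.tsum_eq (g := fun d : ℕ => n + d)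
            (add_right_injective n) (f := fun k => if n ≤ k then f k else 0)
            (fun k hk => by
              rcases le_or_gt n k with h' | h'
              · exact ⟨k - n, show n + (k - n) = k by omega⟩
              · exact absurd (if_neg (Nat.not_le.2 h')) hk)]
          exact tsum_congr fun d => if_pos (Nat.le_add_right n d)

lemma tsum_lower_tri (g : ℕ → ℕ → ℝ≥0∞) :
    ∑' n, ∑ m ∈ Finset.range n, g n m = ∑' m, ∑' d, g (m+1+d) m := by
  have h1 : ∀ n, ∑ m ∈ Finset.range n, g n m = ∑' m, if m < n then g n m else 0 := by
    intro n
    rw [tsum_eq_sum (s := Finset.range n) (fun b hb => if_neg (by simpa using hb))]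
    exact Finset.sum_congr rfl fun m hm => (if_pos (Finset.mem_range.mp hm)).symm
  calc ∑' n, ∑ m ∈ Finset.range n, g n m
      = ∑' n, ∑' m, if m < n then g n m else 0 := tsum_congr h1
    _ = ∑' m, ∑' n, if m < n then g n m else 0 := ENNReal.tsum_comm
    _ = ∑' m, ∑' d, g (m+1+d) m := by
        refine tsum_congr fun m => ?_
        rw [← Function.Injective.tsum_eq (g := fun d : ℕ => m + 1 + d)
          (add_right_injective (m+1)) (f := fun n => if m < n then g n m else 0)
          (fun n hn => by
            rcases Nat.lt_or_ge m n with h' | h'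
            · exact ⟨n - m - 1, show m + 1 + (n - m - 1) = n by omega⟩
            · exact absurd (if_neg (Nat.not_lt.2 h')) hn)]
        exact tsum_congr fun d => if_pos (show m < m + 1 + d by omega)

lemma tsum_ofReal_geom (c r : ℝ) (hc : 0 ≤ c) (hr0 : 0 ≤ r) (hr1 : r < 1) :
    ∑' k : ℕ, ENNReal.ofReal (c * r ^ k) = ENNReal.ofReal (c / (1 - r)) := by
  rw [← ENNReal.ofReal_tsum_of_nonneg (fun n => by positivity)
    ((summable_geometric_of_lt_one hr0 hr1).mul_left c)]
  congr 1
  rw [tsum_mul_left, tsum_geometric_of_lt_one hr0 hr1, div_eq_mul_inv]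

end series

section W
variable {Ω : Type*} [MeasurableSpace Ω] {μ : Measure Ω} [IsProbabilityMeasure μ]
variable {α : ℝ} {V : ℕ → Ω → ℝ}

lemma stick_sq (V : ℕ → Ω → ℝ) (k : ℕ) (x : Ω) :
    stick V k x * stick V k x = (V k x)^(2:ℕ) * ∏ i ∈ Finset.range k, (1 - V i x)^(2:ℕ) := by
  rw [stick, Finset.prod_pow]
  ring

lemma stick_off (V : ℕ → Ω → ℝ) (k d : ℕ) (x : Ω) :
    stick V k x * stick V (k+1+d) x =
      (∏ i ∈ Finset.range k, (1 - V i x)^(2:ℕ)) * (V k x * (1 - V k x))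
        * (∏ j ∈ Finset.range d, (1 - V (k+1+j) x)) * V (k+1+d) x := by
  rw [stick, stick, Finset.prod_range_add (fun i => (1 - V i x)) (k+1) d,
    Finset.prod_range_succ, Finset.prod_pow]
  ring

lemma good_ae (hmV : ∀ k, Measurable (V k)) (hlawV : ∀ k, μ.map (V k) = betaOne α) :
    ∀ᵐ x ∂μ, ∀ i, V i x ∈ Set.Icc (0:ℝ) 1 := by
  rw [ae_all_iff]
  intro i
  have h0 : μ (V i ⁻¹' (Set.Icc (0:ℝ) 1)ᶜ) = 0 := by
    rw [← Measure.map_apply (hmV i) measurableSet_Icc.compl, hlawV i, betaOne,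
      withDensity_apply _ measurableSet_Icc.compl,
      Measure.restrict_restrict measurableSet_Icc.compl]
    simp [Set.compl_inter_self]
  exact h0

lemma W_diag (hα : 0 < α) (hmV : ∀ k, Measurable (V k))
    (hindepV : iIndepFun V μ)
    (hlawV : ∀ k, μ.map (V k) = betaOne α) (k : ℕ) :
    ∫⁻ x, ENNReal.ofReal (stick V k x * stick V k x) ∂μ
      = ENNReal.ofReal ((2/((1+α)*(2+α))) * (α/(2+α))^k) := by
  classical
  set φ : ℕ → ℝ → ℝ≥0∞ := fun i v =>
    if i = k then ENNReal.ofReal (v^(2:ℕ)) else ENNReal.ofReal ((1-v)^(2:ℕ)) with hφdef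
  have hφm : ∀ i, Measurable (φ i) := fun i =>
    Measurable.ite (MeasurableSet.const _) (by fun_prop) (by fun_prop)
  have hpt : ∀ x, ENNReal.ofReal (stick V k x * stick V k x)
      = ∏ i ∈ Finset.range (k+1), φ i (V i x) := by
    intro x
    rw [stick_sq, ENNReal.ofReal_mul (sq_nonneg _),
      ENNReal.ofReal_prod_of_nonneg (fun i _ => sq_nonneg _), Finset.prod_range_succ]
    have h1 : φ k (V k x) = ENNReal.ofReal ((V k x)^(2:ℕ)) := by simp [φ]
    have h2 : ∀ i ∈ Finset.range k, φ i (V i x) = ENNReal.ofReal ((1 - V i x)^(2:ℕ)) :=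
      fun i hi => by simp [φ, (Finset.mem_range.1 hi).ne]
    rw [h1, Finset.prod_congr rfl h2, mul_comm]
  rw [lintegral_congr hpt, lint_prod V hmV hindepV φ hφm (Finset.range (k+1))]
  have hmom : ∀ i, ∫⁻ x, φ i (V i x) ∂μ =
      if i = k then ENNReal.ofReal (2/((1+α)*(2+α))) else ENNReal.ofReal (α/(2+α)) := by
    intro i
    have hmap : ∀ (ψ : ℝ → ℝ≥0∞), Measurable ψ →
        ∫⁻ x, ψ (V i x) ∂μ = ∫⁻ v, ψ v ∂(betaOne α) := fun ψ hψ => by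
      rw [← lintegral_map hψ (hmV i), hlawV i]
    by_cases h : i = k
    · subst h
      simp only [hφdef, if_pos rfl]
      rw [hmap (fun v => ENNReal.ofReal (v^(2:ℕ))) (by fun_prop), moment_vsq hα]
      simp
    · simp only [hφdef, if_neg h]
      rw [hmap (fun v => ENNReal.ofReal ((1-v)^(2:ℕ))) (by fun_prop), moment_1mvsq hα]
  rw [Finset.prod_congr rfl (fun i _ => hmom i), Finset.prod_range_succ, if_pos rfl]
  have h3 : ∀ i ∈ Finset.range k,
      (if i = k then ENNReal.ofReal (2/((1+α)*(2+α))) else ENNReal.ofReal (α/(2+α)))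
        = ENNReal.ofReal (α/(2+α)) := fun i hi => if_neg (Finset.mem_range.1 hi).ne
  rw [Finset.prod_congr rfl h3, Finset.prod_const, Finset.card_range,
    ← ENNReal.ofReal_pow (by positivity), ← ENNReal.ofReal_mul (by positivity)]
  exact congrArg ENNReal.ofReal (mul_comm _ _)

lemma W_off (hα : 0 < α) (hmV : ∀ k, Measurable (V k))
    (hindepV : iIndepFun V μ)
    (hlawV : ∀ k, μ.map (V k) = betaOne α) (k d : ℕ) :
    ∫⁻ x, ENNReal.ofReal (stick V k x * stick V (k+1+d) x) ∂μ
      = ENNReal.ofReal ((α/((1+α)*(2+α))) * (α/(2+α))^k * ((1/(1+α)) * (α/(1+α))^d)) := by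
  classical
  have h1α : (0:ℝ) < 1+α := by linarith
  have h2α : (0:ℝ) < 2+α := by linarith
  set φ : ℕ → ℝ → ℝ≥0∞ := fun i v =>
    if i < k then ENNReal.ofReal ((1-v)^(2:ℕ))
    else if i = k then ENNReal.ofReal (v*(1-v))
    else if i = k+1+d then ENNReal.ofReal v
    else ENNReal.ofReal (1-v) with hφdef
  have hφm : ∀ i, Measurable (φ i) := fun i =>
    Measurable.ite (.const _) (by fun_prop) (Measurable.ite (.const _) (by fun_prop)
      (Measurable.ite (.const _) (by fun_prop) (by fun_prop)))
  have hprod : ∀ x, ∏ i ∈ Finset.range (k+1+d+1), φ i (V i x)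
      = (∏ i ∈ Finset.range k, ENNReal.ofReal ((1 - V i x)^(2:ℕ)))
        * ENNReal.ofReal (V k x * (1 - V k x))
        * (∏ j ∈ Finset.range d, ENNReal.ofReal (1 - V (k+1+j) x))
        * ENNReal.ofReal (V (k+1+d) x) := by
    intro x
    rw [Finset.prod_range_succ, Finset.prod_range_add (fun i => φ i (V i x)) (k+1) d,
      Finset.prod_range_succ]
    have e1 : φ (k+1+d) (V (k+1+d) x) = ENNReal.ofReal (V (k+1+d) x) := by
      simp only [hφdef]; rw [if_neg (by omega), if_neg (by omega)]; simp
    have e2 : φ k (V k x) = ENNReal.ofReal (V k x * (1 - V k x)) := by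
      simp only [hφdef]; rw [if_neg (by omega)]; simp
    have e3 : ∀ j ∈ Finset.range d, φ (k+1+j) (V (k+1+j) x)
        = ENNReal.ofReal (1 - V (k+1+j) x) := by
      intro j hj
      have hjd := Finset.mem_range.1 hj
      simp only [hφdef]; rw [if_neg (by omega), if_neg (by omega), if_neg (by omega)]
    have e4 : ∀ i ∈ Finset.range k, φ i (V i x) = ENNReal.ofReal ((1 - V i x)^(2:ℕ)) := by
      intro i hi
      simp only [hφdef]; rw [if_pos (Finset.mem_range.1 hi)]
    rw [e1, e2, Finset.prod_congr rfl e3, Finset.prod_congr rfl e4]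
  have hae : (fun x => ENNReal.ofReal (stick V k x * stick V (k+1+d) x))
      =ᵐ[μ] fun x => ∏ i ∈ Finset.range (k+1+d+1), φ i (V i x) := by
    filter_upwards [good_ae hmV hlawV] with x hx
    rw [stick_off, hprod x]
    have hA : 0 ≤ ∏ i ∈ Finset.range k, (1 - V i x)^(2:ℕ) :=
      Finset.prod_nonneg fun i _ => sq_nonneg _
    have hB : 0 ≤ V k x * (1 - V k x) := mul_nonneg (hx k).1 (by linarith [(hx k).2])
    have hC : 0 ≤ ∏ j ∈ Finset.range d, (1 - V (k+1+j) x) :=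
      Finset.prod_nonneg fun j _ => by linarith [(hx (k+1+j)).2]
    rw [ENNReal.ofReal_mul (by positivity), ENNReal.ofReal_mul (by positivity),
      ENNReal.ofReal_mul hA,
      ENNReal.ofReal_prod_of_nonneg (fun i _ => sq_nonneg _),
      ENNReal.ofReal_prod_of_nonneg (fun j _ => by linarith [(hx (k+1+j)).2])]
  rw [lintegral_congr_ae hae, lint_prod V hmV hindepV φ hφm (Finset.range (k+1+d+1))]
  have hmom : ∀ i, ∫⁻ x, φ i (V i x) ∂μ
      = if i < k then ENNReal.ofReal (α/(2+α))
        else if i = k then ENNReal.ofReal (α/((1+α)*(2+α)))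
        else if i = k+1+d then ENNReal.ofReal (1/(1+α))
        else ENNReal.ofReal (α/(1+α)) := by
    intro i
    have hmap : ∀ (ψ : ℝ → ℝ≥0∞), Measurable ψ →
        ∫⁻ x, ψ (V i x) ∂μ = ∫⁻ v, ψ v ∂(betaOne α) := fun ψ hψ => by
      rw [← lintegral_map hψ (hmV i), hlawV i]
    by_cases h1 : i < k
    · simp only [hφdef, if_pos h1]
      rw [hmap (fun v => ENNReal.ofReal ((1-v)^(2:ℕ))) (by fun_prop), moment_1mvsq hα]
    · by_cases h2 : i = k
      · simp only [hφdef, if_neg h1, if_pos h2]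
        rw [hmap (fun v => ENNReal.ofReal (v*(1-v))) (by fun_prop), moment_v1mv hα]
      · by_cases h3 : i = k+1+d
        · simp only [hφdef, if_neg h1, if_neg h2, if_pos h3]
          rw [hmap (fun v => ENNReal.ofReal v) (by fun_prop), moment_v hα]
        · simp only [hφdef, if_neg h1, if_neg h2, if_neg h3]
          rw [hmap (fun v => ENNReal.ofReal (1-v)) (by fun_prop), moment_1mv hα]
  rw [Finset.prod_congr rfl (fun i _ => hmom i), Finset.prod_range_succ,
    Finset.prod_range_add (fun i => if i < k then ENNReal.ofReal (α/(2+α))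
        else if i = k then ENNReal.ofReal (α/((1+α)*(2+α)))
        else if i = k+1+d then ENNReal.ofReal (1/(1+α))
        else ENNReal.ofReal (α/(1+α))) (k+1) d,
    Finset.prod_range_succ]
  have f1 : (if k+1+d < k then ENNReal.ofReal (α/(2+α))
        else if k+1+d = k then ENNReal.ofReal (α/((1+α)*(2+α)))
        else if k+1+d = k+1+d then ENNReal.ofReal (1/(1+α))
        else ENNReal.ofReal (α/(1+α))) = ENNReal.ofReal (1/(1+α)) := by
    rw [if_neg (by omega), if_neg (by omega), if_pos rfl]
  have f2 : (if k < k then ENNReal.ofReal (α/(2+α))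
        else if k = k then ENNReal.ofReal (α/((1+α)*(2+α)))
        else if k = k+1+d then ENNReal.ofReal (1/(1+α))
        else ENNReal.ofReal (α/(1+α))) = ENNReal.ofReal (α/((1+α)*(2+α))) := by
    rw [if_neg (by omega), if_pos rfl]
  have f3 : ∀ j ∈ Finset.range d, (if k+1+j < k then ENNReal.ofReal (α/(2+α))
        else if k+1+j = k then ENNReal.ofReal (α/((1+α)*(2+α)))
        else if k+1+j = k+1+d then ENNReal.ofReal (1/(1+α))
        else ENNReal.ofReal (α/(1+α))) = ENNReal.ofReal (α/(1+α)) := by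
    intro j hj
    have hjd := Finset.mem_range.1 hj
    rw [if_neg (by omega), if_neg (by omega), if_neg (by omega)]
  have f4 : ∀ i ∈ Finset.range k, (if i < k then ENNReal.ofReal (α/(2+α))
        else if i = k then ENNReal.ofReal (α/((1+α)*(2+α)))
        else if i = k+1+d then ENNReal.ofReal (1/(1+α))
        else ENNReal.ofReal (α/(1+α))) = ENNReal.ofReal (α/(2+α)) :=
    fun i hi => if_pos (Finset.mem_range.1 hi)
  rw [f1, f2, Finset.prod_congr rfl f3, Finset.prod_congr rfl f4,
    Finset.prod_const, Finset.prod_const, Finset.card_range, Finset.card_range]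
  have hp0 : (0:ℝ) ≤ α/(2+α) := div_nonneg hα.le h2α.le
  have hq0 : (0:ℝ) ≤ α/(1+α) := div_nonneg hα.le h1α.le
  have hc10 : (0:ℝ) ≤ 1/(1+α) := div_nonneg zero_le_one h1α.le
  have hc110 : (0:ℝ) ≤ α/((1+α)*(2+α)) := div_nonneg hα.le (mul_nonneg h1α.le h2α.le)
  rw [← ENNReal.ofReal_pow hp0, ← ENNReal.ofReal_pow hq0,
    ← ENNReal.ofReal_mul (pow_nonneg hp0 k),
    ← ENNReal.ofReal_mul (mul_nonneg (pow_nonneg hp0 k) hc110),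
    ← ENNReal.ofReal_mul (mul_nonneg (mul_nonneg (pow_nonneg hp0 k) hc110) (pow_nonneg hq0 d))]
  exact congrArg ENNReal.ofReal (by ring)

end W


/-- mixed-moment identity, Proposition 1: for GEM(α) weights (π_k)
independent of an identically distributed, pairwise exchangeable sequence (X_k),
`E[∑_{k1,k2} π_{k1} π_{k2} f1(X_{k1}) f2(X_{k2})]
  = q1 E[f1(X_0) f2(X_0)] + (1-q1) E[f1(X_0) f2(X_1)]` with `q1 = 1/(1+α)`. -/
theorem cam_mixed_moments {Ω E : Type*} [MeasurableSpace Ω] [MeasurableSpace E]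
    (μ : Measure Ω) [IsProbabilityMeasure μ]
    (α : ℝ) (hα : 0 < α) (V : ℕ → Ω → ℝ) (X : ℕ → Ω → E)
    (hmV : ∀ k, Measurable (V k)) (hmX : ∀ k, Measurable (X k))
    (hlawV : ∀ k, μ.map (V k) = betaOne α)
    (hindepV : iIndepFun V μ)
    (hindepVX : IndepFun (fun x k => V k x) (fun x k => X k x) μ)
    (hid : ∀ k, μ.map (X k) = μ.map (X 0))
    (hpair : ∀ k1 k2, k1 ≠ k2 →
      μ.map (fun x => (X k1 x, X k2 x)) = μ.map (fun x => (X 0 x, X 1 x)))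
    (f1 f2 : E → ℝ≥0∞) (hf1 : Measurable f1) (hf2 : Measurable f2) :
    ∫⁻ x, ∑' (k1 : ℕ) (k2 : ℕ),
        ENNReal.ofReal (stick V k1 x * stick V k2 x) * (f1 (X k1 x) * f2 (X k2 x)) ∂μ
      = ENNReal.ofReal (1 / (1 + α)) * ∫⁻ x, f1 (X 0 x) * f2 (X 0 x) ∂μ
        + ENNReal.ofReal (1 - 1 / (1 + α)) * ∫⁻ x, f1 (X 0 x) * f2 (X 1 x) ∂μ := by
  classical
  have h1α : (0:ℝ) < 1+α := by linarith
  have h2α : (0:ℝ) < 2+α := by linarith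
  set W : ℕ → ℕ → ℝ≥0∞ :=
    fun k1 k2 => ∫⁻ x, ENNReal.ofReal (stick V k1 x * stick V k2 x) ∂μ with hWdef
  set Cf : ℕ → ℕ → ℝ≥0∞ :=
    fun k1 k2 => ∫⁻ x, f1 (X k1 x) * f2 (X k2 x) ∂μ with hCdef
  have hmstick : ∀ k, Measurable (stick V k) := fun k =>
    (hmV k).mul (Finset.measurable_prod _ fun i _ => measurable_const.sub (hmV i))
  have hmT : ∀ k1 k2 : ℕ, Measurable fun x =>
      ENNReal.ofReal (stick V k1 x * stick V k2 x) * (f1 (X k1 x) * f2 (X k2 x)) :=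
    fun k1 k2 => (((hmstick k1).mul (hmstick k2)).ennreal_ofReal).mul
      ((hf1.comp (hmX k1)).mul (hf2.comp (hmX k2)))
  have hfac : ∀ k1 k2 : ℕ, (∫⁻ x, ENNReal.ofReal (stick V k1 x * stick V k2 x)
      * (f1 (X k1 x) * f2 (X k2 x)) ∂μ) = W k1 k2 * Cf k1 k2 := by
    intro k1 k2
    have hΦ : Measurable fun w : ℕ → ℝ => ENNReal.ofReal
        ((w k1 * ∏ i ∈ Finset.range k1, (1 - w i))
          * (w k2 * ∏ i ∈ Finset.range k2, (1 - w i))) := by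
      apply Measurable.ennreal_ofReal
      exact ((measurable_pi_apply k1).mul
          (Finset.measurable_prod _ fun i _ => measurable_const.sub (measurable_pi_apply i))).mul
        ((measurable_pi_apply k2).mul
          (Finset.measurable_prod _ fun i _ => measurable_const.sub (measurable_pi_apply i)))
    have hΨ : Measurable fun y : ℕ → E => f1 (y k1) * f2 (y k2) :=
      (hf1.comp (measurable_pi_apply k1)).mul (hf2.comp (measurable_pi_apply k2))
    have hind : IndepFun (fun x => ENNReal.ofReal (stick V k1 x * stick V k2 x))
        (fun x => f1 (X k1 x) * f2 (X k2 x)) μ := hindepVX.comp hΦ hΨ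
    exact lintegral_mul_eq_lintegral_mul_lintegral_of_indepFun''
      ((hmstick k1).mul (hmstick k2)).ennreal_ofReal.aemeasurable
      ((hf1.comp (hmX k1)).mul (hf2.comp (hmX k2))).aemeasurable hind
  have hC00 : ∀ k : ℕ, Cf k k = Cf 0 0 := by
    intro k
    have h : ∀ j : ℕ, (∫⁻ x, f1 (X j x) * f2 (X j x) ∂μ)
        = ∫⁻ a, f1 a * f2 a ∂(μ.map (X j)) := fun j =>
      (lintegral_map (hf1.mul hf2) (hmX j)).symm
    show (∫⁻ x, f1 (X k x) * f2 (X k x) ∂μ) = ∫⁻ x, f1 (X 0 x) * f2 (X 0 x) ∂μ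
    rw [h k, h 0, hid k]
  have hC01 : ∀ k1 k2 : ℕ, k1 ≠ k2 → Cf k1 k2 = Cf 0 1 := by
    intro k1 k2 hne
    have hF : Measurable fun pp : E × E => f1 pp.1 * f2 pp.2 :=
      (hf1.comp measurable_fst).mul (hf2.comp measurable_snd)
    have h : ∀ j1 j2 : ℕ, (∫⁻ x, f1 (X j1 x) * f2 (X j2 x) ∂μ)
        = ∫⁻ pp : E × E, f1 pp.1 * f2 pp.2 ∂(μ.map fun x => (X j1 x, X j2 x)) := fun j1 j2 =>
      (lintegral_map hF ((hmX j1).prodMk (hmX j2))).symm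
    show (∫⁻ x, f1 (X k1 x) * f2 (X k2 x) ∂μ) = ∫⁻ x, f1 (X 0 x) * f2 (X 1 x) ∂μ
    rw [h k1 k2, hpair k1 k2 hne, ← h 0 1]
  have hWsymm : ∀ a b : ℕ, W a b = W b a := fun a b =>
    lintegral_congr fun x => by rw [mul_comm]
  -- Tonelli
  rw [lintegral_tsum (fun k1 => (Measurable.ennreal_tsum fun k2 => hmT k1 k2).aemeasurable)]
  have step1 : ∀ k1 : ℕ, (∫⁻ x, ∑' (k2 : ℕ), ENNReal.ofReal (stick V k1 x * stick V k2 x)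
      * (f1 (X k1 x) * f2 (X k2 x)) ∂μ) = ∑' k2 : ℕ, W k1 k2 * Cf k1 k2 := by
    intro k1
    rw [lintegral_tsum (fun k2 => (hmT k1 k2).aemeasurable)]
    exact tsum_congr fun k2 => hfac k1 k2
  rw [tsum_congr step1]
  -- split each inner sum
  have hsplit : ∀ k1 : ℕ, (∑' k2 : ℕ, W k1 k2 * Cf k1 k2)
      = (∑ m ∈ Finset.range k1, W k1 m * Cf k1 m)
        + ((W k1 k1 * Cf k1 k1) + ∑' d : ℕ, W k1 (k1+1+d) * Cf k1 (k1+1+d)) := by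
    intro k1
    rw [ennreal_tsum_split (fun k2 => W k1 k2 * Cf k1 k2) (k1+1), Finset.sum_range_succ,
      add_assoc]
  rw [tsum_congr hsplit, ENNReal.tsum_add, ENNReal.tsum_add]
  -- constants
  set p : ℝ := α/(2+α) with hpdef
  set q : ℝ := α/(1+α) with hqdef
  set c2 : ℝ := 2/((1+α)*(2+α)) with hc2def
  set c1 : ℝ := 1/(1+α) with hc1def
  set c11 : ℝ := α/((1+α)*(2+α)) with hc11def
  have hp0 : 0 ≤ p := div_nonneg hα.le h2α.le
  have hp1 : p < 1 := (div_lt_one h2α).2 (by linarith)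
  have hq0 : 0 ≤ q := div_nonneg hα.le h1α.le
  have hq1 : q < 1 := (div_lt_one h1α).2 (by linarith)
  have hc20 : 0 ≤ c2 := div_nonneg (by norm_num) (mul_nonneg h1α.le h2α.le)
  have hc10 : 0 ≤ c1 := div_nonneg zero_le_one h1α.le
  have hc110 : 0 ≤ c11 := div_nonneg hα.le (mul_nonneg h1α.le h2α.le)
  -- diagonal sum
  have hdiag : (∑' k : ℕ, W k k * Cf k k) = ENNReal.ofReal c1 * Cf 0 0 := by
    have h1 : ∀ k : ℕ, W k k * Cf k k = ENNReal.ofReal (c2 * p^k) * Cf 0 0 := by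
      intro k
      rw [hC00 k]
      congr 1
      exact W_diag hα hmV hindepV hlawV k
    rw [tsum_congr h1, ENNReal.tsum_mul_right, tsum_ofReal_geom c2 p hc20 hp0 hp1]
    have hne1 : (1:ℝ)+α ≠ 0 := ne_of_gt h1α
    have hne2 : (2:ℝ)+α ≠ 0 := ne_of_gt h2α
    refine congrArg (fun r => ENNReal.ofReal r * Cf 0 0) ?_
    rw [hpdef, hc2def, hc1def, show 1 - α/(2+α) = 2/(2+α) by field_simp; ring]
    field_simp
  have hne1 : (1:ℝ)+α ≠ 0 := ne_of_gt h1α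
  have hne2 : (2:ℝ)+α ≠ 0 := ne_of_gt h2α
  -- upper sum
  have hupper : (∑' (k : ℕ) (d : ℕ), W k (k+1+d) * Cf k (k+1+d))
      = ENNReal.ofReal (α/(2*(1+α))) * Cf 0 1 := by
    have h1 : ∀ k d : ℕ, W k (k+1+d) * Cf k (k+1+d)
        = ENNReal.ofReal (c11 * p^k * (c1 * q^d)) * Cf 0 1 := by
      intro k d
      rw [hC01 k (k+1+d) (by omega)]
      congr 1
      exact W_off hα hmV hindepV hlawV k d
    calc (∑' (k : ℕ) (d : ℕ), W k (k+1+d) * Cf k (k+1+d))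
        = ∑' (k : ℕ) (d : ℕ), ENNReal.ofReal (c11 * p^k * (c1 * q^d)) * Cf 0 1 :=
          tsum_congr fun k => tsum_congr fun d => h1 k d
      _ = ∑' k : ℕ, (∑' d : ℕ, ENNReal.ofReal (c11 * p^k * (c1 * q^d))) * Cf 0 1 :=
          tsum_congr fun k => ENNReal.tsum_mul_right
      _ = ∑' k : ℕ, ENNReal.ofReal ((c11 * c1 / (1-q)) * p^k) * Cf 0 1 := by
          refine tsum_congr fun k => ?_
          have : (∑' d : ℕ, ENNReal.ofReal (c11 * p^k * (c1 * q^d)))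
              = ENNReal.ofReal ((c11 * p^k * c1) / (1-q)) := by
            rw [← tsum_ofReal_geom (c11 * p^k * c1) q
              (mul_nonneg (mul_nonneg hc110 (pow_nonneg hp0 k)) hc10) hq0 hq1]
            exact tsum_congr fun d => congrArg ENNReal.ofReal (by ring)
          rw [this]
          congr 2
          ring
      _ = ENNReal.ofReal ((c11 * c1 / (1-q)) / (1-p)) * Cf 0 1 := by
          rw [ENNReal.tsum_mul_right,
            tsum_ofReal_geom (c11 * c1 / (1-q)) p
              (div_nonneg (mul_nonneg hc110 hc10) (by linarith)) hp0 hp1]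
      _ = ENNReal.ofReal (α/(2*(1+α))) * Cf 0 1 := by
          refine congrArg (fun r => ENNReal.ofReal r * Cf 0 1) ?_
          rw [hqdef, hpdef, hc11def, hc1def,
            show 1 - α/(1+α) = 1/(1+α) by field_simp; ring,
            show 1 - α/(2+α) = 2/(2+α) by field_simp; ring]
          field_simp
  -- lower sum
  have hlower : (∑' k1 : ℕ, ∑ m ∈ Finset.range k1, W k1 m * Cf k1 m)
      = ENNReal.ofReal (α/(2*(1+α))) * Cf 0 1 := by
    rw [tsum_lower_tri (fun n m => W n m * Cf n m)]
    have h2 : ∀ m d : ℕ, W (m+1+d) m * Cf (m+1+d) m = W m (m+1+d) * Cf m (m+1+d) := by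
      intro m d
      rw [hWsymm, hC01 (m+1+d) m (by omega), hC01 m (m+1+d) (by omega)]
    rw [tsum_congr fun m => tsum_congr fun d => h2 m d]
    exact hupper
  rw [hlower, hdiag, hupper, add_left_comm, ← add_mul, ← ENNReal.ofReal_add
    (div_nonneg hα.le (by linarith)) (div_nonneg hα.le (by linarith))]
  refine congrArg (fun r => ENNReal.ofReal c1 * Cf 0 0 + ENNReal.ofReal r * Cf 0 1) ?_
  rw [hc1def]
  field_simp
  ring
end

section
/- Let β > 0, let X be a measurable space with measurable singletons, and let H be an atomless probability measure on X. Let (ω_l)_{l≥1} and (ω'_l)_{l≥1} be GEM(β) stick-breaking weight sequences built from two mutually independent i.i.d. sequences of Beta(1,β) random variables, and let (θ_l)_{l≥1} be an i.i.d. sequence with common law H, independent of both stick sequences. Define the common-atom random probability measures G*_1 = ∑_{l≥1} ω_l δ_{θ_l} and G*_2 = ∑_{l≥1} ω'_l δ_{θ_l}. Then for all measurable sets A, B ⊆ X: E[G*_1(A)·G*_2(B)] = (1/(1+2β))·H(A ∩ B) + (2β/(1+2β))·H(A)·H(B). -/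
open MeasureTheory ProbabilityTheory

/-- Index family for joint independence of two stick sequences (ℝ-valued) and the
common atoms (X-valued). -/
abbrev fam3 (X : Type) : ℕ ⊕ ℕ ⊕ ℕ → Type :=
  Sum.elim (fun _ => ℝ) (Sum.elim (fun _ => ℝ) (fun _ => X))

/-- Measurable-space structure on the family. -/
noncomputable def fam3MS (X : Type) [mX : MeasurableSpace X] :
    ∀ i, MeasurableSpace (fam3 X i)
  | .inl _ => inferInstanceAs (MeasurableSpace ℝ)
  | .inr (.inl _) => inferInstanceAs (MeasurableSpace ℝ)
  | .inr (.inr _) => mX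

/-- The combined process of the two stick sequences and the atoms. -/
def fam3F {Ω : Type*} {X : Type} (V V' : ℕ → Ω → ℝ) (θ : ℕ → Ω → X) :
    ∀ i, Ω → fam3 X i
  | .inl k => V k
  | .inr (.inl k) => V' k
  | .inr (.inr l) => θ l

/- ### Auxiliary lemmas -/

lemma stick_sum_range {Ω : Type*} (V : ℕ → Ω → ℝ) (x : Ω) (n : ℕ) :
    ∑ i ∈ Finset.range n, stick V i x = 1 - ∏ i ∈ Finset.range n, (1 - V i x) := by
  induction n with
  | zero => simp
  | succ n ih =>
    rw [Finset.sum_range_succ, Finset.prod_range_succ, ih, stick]; ring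

lemma integral_finset_prod_of_iIndepFun {Ω : Type*} [MeasurableSpace Ω]
    {μ : Measure Ω} [IsProbabilityMeasure μ] {ι : Type*}
    {f : ι → Ω → ℝ} (h : iIndepFun f μ)
    (hm : ∀ i, Measurable (f i)) (s : Finset ι) :
    ∫ x, ∏ i ∈ s, f i x ∂μ = ∏ i ∈ s, ∫ x, f i x ∂μ := by
  classical
  induction s using Finset.induction_on with
  | empty => simp
  | @insert a s ha ih =>
    have hps : Measurable (fun x => ∏ i ∈ s, f i x) :=
      Finset.measurable_prod s (fun i _ => hm i)
    have hind : IndepFun (f a) (∏ j ∈ s, f j) μ :=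
      (h.indepFun_finset_prod_of_notMem hm ha).symm
    have h2 : (∫ x, f a x * (∏ j ∈ s, f j) x ∂μ)
        = (∫ x, f a x ∂μ) * ∫ x, (∏ j ∈ s, f j) x ∂μ :=
      hind.integral_fun_mul_eq_mul_integral (hm a).aestronglyMeasurable
        (by simpa [Finset.prod_fn] using hps.aestronglyMeasurable)
    simp only [Finset.prod_apply] at h2
    rw [Finset.prod_insert ha, ← ih, ← h2]
    congr 1
    ext x
    rw [Finset.prod_insert ha]

lemma integral_one_sub_betaOne {β : ℝ} (hβ : 0 < β) :
    ∫ y, (1 - y) ∂(betaOne β) = β / (1 + β) := by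
  have h1β : (0:ℝ) < 1 + β := by linarith
  have hd : Measurable fun y : ℝ => ENNReal.ofReal (β * (1 - y) ^ (β - 1)) := by
    fun_prop
  have hIcc : ∀ᵐ y ∂(betaOne β), y ∈ Set.Icc (0:ℝ) 1 :=
    (withDensity_absolutelyContinuous _ _).ae_le (ae_restrict_mem measurableSet_Icc)
  have hnn : 0 ≤ᵐ[betaOne β] fun y => 1 - y := by
    filter_upwards [hIcc] with y hy
    simp only [Pi.zero_apply]; linarith [hy.2]
  rw [integral_eq_lintegral_of_nonneg_ae hnn
    ((continuous_const.sub continuous_id).aestronglyMeasurable)]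
  unfold betaOne
  rw [lintegral_withDensity_eq_lintegral_mul _ hd
    (g := fun y => ENNReal.ofReal (1 - y)) (by fun_prop)]
  have heq : ∫⁻ y in Set.Icc (0:ℝ) 1,
      ((fun y => ENNReal.ofReal (β * (1 - y) ^ (β - 1))) *
        (fun y => ENNReal.ofReal (1 - y))) y ∂volume
      = ∫⁻ y in Set.Icc (0:ℝ) 1, ENNReal.ofReal (β * (1 - y) ^ β) ∂volume := by
    refine setLIntegral_congr_fun measurableSet_Icc (fun y hy => ?_)
    simp only [Pi.mul_apply]
    rcases eq_or_lt_of_le hy.2 with h1 | h1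
    · subst h1
      simp [Real.zero_rpow hβ.ne']
    · have hpos : (0:ℝ) < 1 - y := by linarith
      rw [← ENNReal.ofReal_mul (by positivity)]
      congr 1
      rw [mul_assoc, ← Real.rpow_add_one hpos.ne' (β - 1)]
      norm_num
  rw [heq]
  have hc : ContinuousOn (fun y : ℝ => β * (1 - y) ^ β) (Set.Icc 0 1) :=
    continuousOn_const.mul (((continuous_const.sub continuous_id).continuousOn).rpow_const
      (fun x _ => Or.inr hβ.le))
  have hint : IntegrableOn (fun y : ℝ => β * (1 - y) ^ β) (Set.Icc 0 1) volume :=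
    hc.integrableOn_Icc
  rw [← ofReal_integral_eq_lintegral_ofReal hint
    ((ae_restrict_mem measurableSet_Icc).mono fun y hy => by
      have : (0:ℝ) ≤ 1 - y := by linarith [hy.2]
      exact mul_nonneg hβ.le (Real.rpow_nonneg this β))]
  have hval : ∫ y in Set.Icc (0:ℝ) 1, β * (1 - y) ^ β = β / (1 + β) := by
    rw [integral_Icc_eq_integral_Ioc, ← intervalIntegral.integral_of_le zero_le_one,
      intervalIntegral.integral_const_mul]
    have h2 : (∫ y in (0:ℝ)..1, (1 - y) ^ β) = ∫ y in (0:ℝ)..1, y ^ β := by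
      have := intervalIntegral.integral_comp_sub_left (a := (0:ℝ)) (b := 1)
        (fun y => y ^ β) 1
      simpa using this
    rw [h2, integral_rpow (Or.inl (by linarith))]
    rw [Real.one_rpow, Real.zero_rpow (by positivity)]
    norm_num
    rw [div_eq_mul_inv, add_comm 1 β]
  rw [hval, ENNReal.toReal_ofReal (by positivity)]

def emb1 : ℕ ↪ ℕ ⊕ ℕ ⊕ ℕ := ⟨Sum.inl, Sum.inl_injective⟩
def emb2 : ℕ ↪ ℕ ⊕ ℕ ⊕ ℕ := ⟨fun k => Sum.inr (Sum.inl k), fun p q h => by simpa using h⟩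
def emb3 : ℕ ↪ ℕ ⊕ ℕ ⊕ ℕ := ⟨fun k => Sum.inr (Sum.inr k), fun p q h => by simpa using h⟩

@[simp] lemma emb1_apply (k : ℕ) : emb1 k = Sum.inl k := rfl
@[simp] lemma emb2_apply (k : ℕ) : emb2 k = Sum.inr (Sum.inl k) := rfl
@[simp] lemma emb3_apply (k : ℕ) : emb3 k = Sum.inr (Sum.inr k) := rfl

lemma disj12 (s t : Finset ℕ) : Disjoint (s.map emb1) (t.map emb2) := by
  rw [Finset.disjoint_left]
  rintro i h1 h2
  obtain ⟨k, -, rfl⟩ := Finset.mem_map.mp h1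
  obtain ⟨k', -, h⟩ := Finset.mem_map.mp h2
  simp at h

lemma disj13 (s t : Finset ℕ) : Disjoint (s.map emb1) (t.map emb3) := by
  rw [Finset.disjoint_left]
  rintro i h1 h2
  obtain ⟨k, -, rfl⟩ := Finset.mem_map.mp h1
  obtain ⟨k', -, h⟩ := Finset.mem_map.mp h2
  simp at h

lemma disj23 (s t : Finset ℕ) : Disjoint (s.map emb2) (t.map emb3) := by
  rw [Finset.disjoint_left]
  rintro i h1 h2
  obtain ⟨k, -, rfl⟩ := Finset.mem_map.mp h1
  obtain ⟨k', -, h⟩ := Finset.mem_map.mp h2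
  simp at h

/-- The coordinate-wise functions whose product gives one cross term. -/
noncomputable def keyG {X : Type} (l m : ℕ) (A' B' : Set X) :
    ∀ i : ℕ ⊕ ℕ ⊕ ℕ, fam3 X i → ℝ
  | .inl k => fun v : ℝ => if k < l then 1 - v else v
  | .inr (.inl k) => fun v : ℝ => if k < m then 1 - v else v
  | .inr (.inr j) => fun t : X =>
      (if j = l then A'.indicator 1 t else 1) * (if j = m then B'.indicator 1 t else 1)

lemma keyG_measurable {X : Type} [mX : MeasurableSpace X] (l m : ℕ) (A' B' : Set X)
    (hA' : MeasurableSet A') (hB' : MeasurableSet B') :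
    ∀ i, @Measurable _ _ (fam3MS X i) _ (keyG l m A' B' i) := by
  rintro (k | k | j)
  · show Measurable fun v : ℝ => if k < l then 1 - v else v
    split_ifs <;> fun_prop
  · show Measurable fun v : ℝ => if k < m then 1 - v else v
    split_ifs <;> fun_prop
  · show Measurable fun t : X =>
      (if j = l then A'.indicator 1 t else 1) * (if j = m then B'.indicator 1 t else 1)
    refine Measurable.mul ?_ ?_ <;> split_ifs <;>
      first
      | exact measurable_one.indicator hA'
      | exact measurable_one.indicator hB'
      | exact measurable_const

set_option maxHeartbeats 1000000 in
/-- for two common-atom random measures `G*_1 = ∑_l ω_l δ_{θ_l}` and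
`G*_2 = ∑_l ω'_l δ_{θ_l}` with independent GEM(β) weights and shared i.i.d. atoms with
atomless law H (all jointly independent):
`E[G*_1(A) G*_2(B)] = (1/(1+2β)) H(A∩B) + (2β/(1+2β)) H(A)H(B)`. -/
theorem cam_cross_moment {Ω : Type*} {X : Type} [MeasurableSpace Ω] [MeasurableSpace X]
    [MeasurableSingletonClass X]
    (μ : Measure Ω) [IsProbabilityMeasure μ]
    (H : Measure X) [IsProbabilityMeasure H] (hH : ∀ p : X, H {p} = 0)
    (β : ℝ) (hβ : 0 < β) (V V' : ℕ → Ω → ℝ) (θ : ℕ → Ω → X)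
    (hmV : ∀ l, Measurable (V l)) (hmV' : ∀ l, Measurable (V' l))
    (hmθ : ∀ l, Measurable (θ l))
    (hlawV : ∀ l, μ.map (V l) = betaOne β) (hlawV' : ∀ l, μ.map (V' l) = betaOne β)
    (hlawθ : ∀ l, μ.map (θ l) = H)
    (hindep : iIndepFun (m := fam3MS X) (fam3F V V' θ) μ)
    (A B : Set X) (hA : MeasurableSet A) (hB : MeasurableSet B) :
    ∫ x, (∑' l : ℕ, A.indicator (fun _ => stick V l x) (θ l x)) *
        (∑' l : ℕ, B.indicator (fun _ => stick V' l x) (θ l x)) ∂μ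
      = 1 / (1 + 2 * β) * (H (A ∩ B)).toReal
        + 2 * β / (1 + 2 * β) * ((H A).toReal * (H B).toReal) := by
  classical
  letI : ∀ i, MeasurableSpace (fam3 X i) := fam3MS X
  have h1β : (0:ℝ) < 1 + β := by linarith
  set c : ℝ := (1 + β)⁻¹ with hc_def
  set a : ℝ := β / (1 + β) with ha_def
  have hc0 : 0 < c := by positivity
  have ha0 : 0 ≤ a := by positivity
  have ha1 : a < 1 := by rw [ha_def, div_lt_one h1β]; linarith
  have h1a : 1 - a = c := by rw [ha_def, hc_def]; field_simp; ring
  -- distribution facts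
  have hprobν : IsProbabilityMeasure (betaOne β) :=
    hlawV 0 ▸ Measure.isProbabilityMeasure_map (hmV 0).aemeasurable
  have hνIcc : ∀ᵐ y ∂(betaOne β), y ∈ Set.Icc (0:ℝ) 1 :=
    (withDensity_absolutelyContinuous _ _).ae_le (ae_restrict_mem measurableSet_Icc)
  have hE1 : ∫ y, (1 - y) ∂(betaOne β) = a := integral_one_sub_betaOne hβ
  have hInt1 : Integrable (fun y : ℝ => 1 - y) (betaOne β) :=
    ⟨(continuous_const.sub continuous_id).aestronglyMeasurable,
     HasFiniteIntegral.of_bounded (C := 1) (hνIcc.mono fun y hy => by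
       rw [Real.norm_eq_abs, abs_le]
       constructor <;> [linarith [hy.2]; linarith [hy.1]])⟩
  have hEy : ∫ y, y ∂(betaOne β) = c := by
    have h0 : ∫ y, y ∂(betaOne β) = ∫ y, (1 - (1 - y)) ∂(betaOne β) := by norm_num
    rw [h0, integral_sub (integrable_const 1) hInt1, hE1, integral_const]
    simp [measure_univ, ← h1a]
  -- single-coordinate expectations
  have hIV1 : ∀ k, ∫ x, (1 - V k x) ∂μ = a := by
    intro k
    have h := integral_map (μ := μ) (hmV k).aemeasurable
      (f := fun y : ℝ => 1 - y) ((continuous_const.sub continuous_id).aestronglyMeasurable)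
    rw [hlawV k, hE1] at h
    exact h.symm
  have hIV2 : ∀ k, ∫ x, V k x ∂μ = c := by
    intro k
    have h := integral_map (μ := μ) (hmV k).aemeasurable
      (f := fun y : ℝ => y) continuous_id.aestronglyMeasurable
    rw [hlawV k, hEy] at h
    exact h.symm
  have hIV1' : ∀ k, ∫ x, (1 - V' k x) ∂μ = a := by
    intro k
    have h := integral_map (μ := μ) (hmV' k).aemeasurable
      (f := fun y : ℝ => 1 - y) ((continuous_const.sub continuous_id).aestronglyMeasurable)
    rw [hlawV' k, hE1] at h
    exact h.symm
  have hIV2' : ∀ k, ∫ x, V' k x ∂μ = c := by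
    intro k
    have h := integral_map (μ := μ) (hmV' k).aemeasurable
      (f := fun y : ℝ => y) continuous_id.aestronglyMeasurable
    rw [hlawV' k, hEy] at h
    exact h.symm
  have hIθ : ∀ (j : ℕ) (S : Set X), MeasurableSet S →
      ∫ x, S.indicator 1 (θ j x) ∂μ = (H S).toReal := by
    intro j S hS
    have h := integral_map (μ := μ) (hmθ j).aemeasurable
      (f := S.indicator (1 : X → ℝ)) (by
        rw [hlawθ j]
        exact (measurable_one.indicator hS).aestronglyMeasurable)
    rw [hlawθ j] at h
    rw [← h, integral_indicator_one hS]; rfl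
  -- measurability of the process
  have hmF : ∀ i, Measurable (fam3F V V' θ i) := by
    rintro (k | k | j)
    exacts [hmV k, hmV' k, hmθ j]
  have hmst : ∀ l, Measurable (stick V l) := fun l =>
    (hmV l).mul (Finset.measurable_prod _ fun i _ => measurable_const.sub (hmV i))
  have hmst' : ∀ l, Measurable (stick V' l) := fun l =>
    (hmV' l).mul (Finset.measurable_prod _ fun i _ => measurable_const.sub (hmV' i))
  -- the key cross-term computation
  have key : ∀ (l m : ℕ) (A' B' : Set X), MeasurableSet A' → MeasurableSet B' →
      (∫ x, (stick V l x * A'.indicator 1 (θ l x)) *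
          (stick V' m x * B'.indicator 1 (θ m x)) ∂μ)
        = (c * a ^ l) * (c * a ^ m) *
          (if l = m then (H (A' ∩ B')).toReal else (H A').toReal * (H B').toReal) := by
    intro l m A' B' hA' hB'
    have hGmeas := keyG_measurable (mX := ‹MeasurableSpace X›) l m A' B' hA' hB'
    have hcomp : iIndepFun
        (fun i => keyG l m A' B' i ∘ fam3F V V' θ i) μ := hindep.comp _ hGmeas
    have hcm : ∀ i, Measurable (keyG l m A' B' i ∘ fam3F V V' θ i) := fun i =>
      (hGmeas i).comp (hmF i)
    have hd1 : Disjoint ((Finset.range (l+1)).map emb1) ((Finset.range (m+1)).map emb2) :=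
      disj12 _ _
    have hd2 : Disjoint ((Finset.range (l+1)).map emb1 ∪ (Finset.range (m+1)).map emb2)
        (({l, m} : Finset ℕ).map emb3) :=
      Finset.disjoint_union_left.mpr ⟨disj13 _ _, disj23 _ _⟩
    have he1 : ∀ (k : ℕ) (x : Ω), (keyG l m A' B' (emb1 k) ∘ fam3F V V' θ (emb1 k)) x
        = if k < l then 1 - V k x else V k x := fun k x => rfl
    have he2 : ∀ (k : ℕ) (x : Ω), (keyG l m A' B' (emb2 k) ∘ fam3F V V' θ (emb2 k)) x
        = if k < m then 1 - V' k x else V' k x := fun k x => rfl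
    have he3 : ∀ (j : ℕ) (x : Ω), (keyG l m A' B' (emb3 j) ∘ fam3F V V' θ (emb3 j)) x
        = (if j = l then A'.indicator 1 (θ j x) else 1) *
          (if j = m then B'.indicator 1 (θ j x) else 1) := fun j x => rfl
    have hprod1 : ∀ x : Ω,
        ∏ i ∈ (Finset.range (l+1)).map emb1, (keyG l m A' B' i ∘ fam3F V V' θ i) x
          = stick V l x := by
      intro x
      rw [Finset.prod_map]
      simp only [he1]
      rw [Finset.prod_range_succ, if_neg (lt_irrefl l),
        Finset.prod_congr rfl (fun k hk => if_pos (Finset.mem_range.mp hk)), stick, mul_comm]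
    have hprod2 : ∀ x : Ω,
        ∏ i ∈ (Finset.range (m+1)).map emb2, (keyG l m A' B' i ∘ fam3F V V' θ i) x
          = stick V' m x := by
      intro x
      rw [Finset.prod_map]
      simp only [he2]
      rw [Finset.prod_range_succ, if_neg (lt_irrefl m),
        Finset.prod_congr rfl (fun k hk => if_pos (Finset.mem_range.mp hk)), stick, mul_comm]
    have hprod3 : ∀ x : Ω,
        ∏ i ∈ (({l, m} : Finset ℕ).map emb3), (keyG l m A' B' i ∘ fam3F V V' θ i) x
          = A'.indicator 1 (θ l x) * B'.indicator 1 (θ m x) := by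
      intro x
      rw [Finset.prod_map]
      simp only [he3]
      rcases eq_or_ne l m with rfl | hlm
      · simp
      · rw [Finset.prod_pair hlm]
        simp [hlm, hlm.symm]
    calc (∫ x, (stick V l x * A'.indicator 1 (θ l x)) *
            (stick V' m x * B'.indicator 1 (θ m x)) ∂μ)
        = ∫ x, ∏ i ∈ ((Finset.range (l+1)).map emb1 ∪ (Finset.range (m+1)).map emb2 ∪
              (({l, m} : Finset ℕ).map emb3)), (keyG l m A' B' i ∘ fam3F V V' θ i) x ∂μ := by
          refine integral_congr_ae (Filter.Eventually.of_forall fun x => ?_)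
          dsimp only
          rw [Finset.prod_union hd2, Finset.prod_union hd1, hprod1 x, hprod2 x, hprod3 x]
          ring
      _ = ∏ i ∈ ((Finset.range (l+1)).map emb1 ∪ (Finset.range (m+1)).map emb2 ∪
              (({l, m} : Finset ℕ).map emb3)), ∫ x, (keyG l m A' B' i ∘ fam3F V V' θ i) x ∂μ :=
          integral_finset_prod_of_iIndepFun hcomp hcm _
      _ = (c * a ^ l) * (c * a ^ m) *
          (if l = m then (H (A' ∩ B')).toReal else (H A').toReal * (H B').toReal) := by
          rw [Finset.prod_union hd2, Finset.prod_union hd1, Finset.prod_map, Finset.prod_map,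
            Finset.prod_map]
          have hf1 : ∏ k ∈ Finset.range (l+1),
              (∫ x, (keyG l m A' B' (emb1 k) ∘ fam3F V V' θ (emb1 k)) x ∂μ) = c * a ^ l := by
            have : ∀ k ∈ Finset.range (l+1),
                (∫ x, (keyG l m A' B' (emb1 k) ∘ fam3F V V' θ (emb1 k)) x ∂μ)
                  = if k < l then a else c := by
              intro k _
              simp only [he1]
              by_cases h : k < l
              · simp only [if_pos h]; exact hIV1 k
              · simp only [if_neg h]; exact hIV2 k
            rw [Finset.prod_congr rfl this, Finset.prod_range_succ, if_neg (lt_irrefl l),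
              Finset.prod_congr rfl (fun k hk => if_pos (Finset.mem_range.mp hk)),
              Finset.prod_const, Finset.card_range, mul_comm]
          have hf2 : ∏ k ∈ Finset.range (m+1),
              (∫ x, (keyG l m A' B' (emb2 k) ∘ fam3F V V' θ (emb2 k)) x ∂μ) = c * a ^ m := by
            have : ∀ k ∈ Finset.range (m+1),
                (∫ x, (keyG l m A' B' (emb2 k) ∘ fam3F V V' θ (emb2 k)) x ∂μ)
                  = if k < m then a else c := by
              intro k _
              simp only [he2]
              by_cases h : k < m
              · simp only [if_pos h]; exact hIV1' k
              · simp only [if_neg h]; exact hIV2' k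
            rw [Finset.prod_congr rfl this, Finset.prod_range_succ, if_neg (lt_irrefl m),
              Finset.prod_congr rfl (fun k hk => if_pos (Finset.mem_range.mp hk)),
              Finset.prod_const, Finset.card_range, mul_comm]
          have hf3 : ∏ j ∈ ({l, m} : Finset ℕ),
              (∫ x, (keyG l m A' B' (emb3 j) ∘ fam3F V V' θ (emb3 j)) x ∂μ)
                = if l = m then (H (A' ∩ B')).toReal else (H A').toReal * (H B').toReal := by
            rcases eq_or_ne l m with rfl | hlm
            · simp only [if_pos rfl]
              have hsingle : ({l, l} : Finset ℕ) = {l} := by simp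
              rw [hsingle, Finset.prod_singleton]
              have hptw : ∀ x : Ω, (keyG l l A' B' (emb3 l) ∘ fam3F V V' θ (emb3 l)) x
                  = (A' ∩ B').indicator 1 (θ l x) := by
                intro x
                rw [he3]
                simp only [if_pos rfl]
                have := congrFun (Set.inter_indicator_one (s := A') (t := B') (M₀ := ℝ)) (θ l x)
                simpa using this.symm
              rw [integral_congr_ae (Filter.Eventually.of_forall hptw)]
              exact hIθ l (A' ∩ B') (hA'.inter hB')
            · rw [if_neg hlm, Finset.prod_pair hlm]
              have hl : ∀ x : Ω, (keyG l m A' B' (emb3 l) ∘ fam3F V V' θ (emb3 l)) x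
                  = A'.indicator 1 (θ l x) := by
                intro x; rw [he3]; simp [hlm]
              have hm' : ∀ x : Ω, (keyG l m A' B' (emb3 m) ∘ fam3F V V' θ (emb3 m)) x
                  = B'.indicator 1 (θ m x) := by
                intro x; rw [he3]; simp [hlm.symm]
              rw [integral_congr_ae (Filter.Eventually.of_forall hl),
                integral_congr_ae (Filter.Eventually.of_forall hm'),
                hIθ l A' hA', hIθ m B' hB']
          rw [hf1, hf2, hf3]
  -- helper facts about indicators and sticks
  have hind_nn : ∀ (S : Set X) (t : X), 0 ≤ S.indicator (1 : X → ℝ) t := fun S t =>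
    Set.indicator_nonneg (fun _ _ => zero_le_one) _
  have hind_le : ∀ (S : Set X) (t : X), S.indicator (1 : X → ℝ) t ≤ 1 := fun S t => by
    by_cases h : t ∈ S <;> simp [h]
  have haeV : ∀ᵐ x ∂μ, ∀ l, V l x ∈ Set.Icc (0:ℝ) 1 := ae_all_iff.mpr fun l =>
    (ae_map_iff (hmV l).aemeasurable measurableSet_Icc).mp (by rw [hlawV l]; exact hνIcc)
  have haeV' : ∀ᵐ x ∂μ, ∀ l, V' l x ∈ Set.Icc (0:ℝ) 1 := ae_all_iff.mpr fun l =>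
    (ae_map_iff (hmV' l).aemeasurable measurableSet_Icc).mp (by rw [hlawV' l]; exact hνIcc)
  have stick_nonneg : ∀ (W : ℕ → Ω → ℝ) (x : Ω), (∀ i, W i x ∈ Set.Icc (0:ℝ) 1) →
      ∀ l, 0 ≤ stick W l x := fun W x hx l =>
    mul_nonneg (hx l).1 (Finset.prod_nonneg fun i _ => by linarith [(hx i).2])
  have stick_le_one : ∀ (W : ℕ → Ω → ℝ) (x : Ω), (∀ i, W i x ∈ Set.Icc (0:ℝ) 1) →
      ∀ l, stick W l x ≤ 1 := by
    intro W x hx l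
    have h1 : ∏ i ∈ Finset.range l, (1 - W i x) ≤ 1 :=
      Finset.prod_le_one (fun i _ => by linarith [(hx i).2]) (fun i _ => by linarith [(hx i).1])
    have h2 : (0:ℝ) ≤ ∏ i ∈ Finset.range l, (1 - W i x) :=
      Finset.prod_nonneg fun i _ => by linarith [(hx i).2]
    calc stick W l x ≤ 1 * ∏ i ∈ Finset.range l, (1 - W i x) :=
          mul_le_mul_of_nonneg_right (hx l).2 h2
      _ ≤ 1 := by rw [one_mul]; exact h1
  have stick_summable : ∀ (W : ℕ → Ω → ℝ) (x : Ω), (∀ i, W i x ∈ Set.Icc (0:ℝ) 1) →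
      Summable (fun l => stick W l x) := by
    intro W x hx
    refine summable_of_sum_range_le (c := 1) (stick_nonneg W x hx) (fun n => ?_)
    rw [stick_sum_range]
    have h2 : (0:ℝ) ≤ ∏ i ∈ Finset.range n, (1 - W i x) :=
      Finset.prod_nonneg fun i _ => by linarith [(hx i).2]
    linarith
  -- rewrite indicator of a constant
  have hfx : ∀ (S : Set X) (W : ℕ → Ω → ℝ) (l : ℕ) (x : Ω),
      S.indicator (fun _ => stick W l x) (θ l x) = stick W l x * S.indicator 1 (θ l x) := by
    intro S W l x
    by_cases h : θ l x ∈ S <;> simp [h]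
  -- step 1: a.e. rewrite the product of sums as a double sum
  have hstep1 : ∀ᵐ x ∂μ, (∑' l : ℕ, A.indicator (fun _ => stick V l x) (θ l x)) *
      (∑' l : ℕ, B.indicator (fun _ => stick V' l x) (θ l x))
      = ∑' p : ℕ × ℕ, (stick V p.1 x * A.indicator 1 (θ p.1 x)) *
          (stick V' p.2 x * B.indicator 1 (θ p.2 x)) := by
    filter_upwards [haeV, haeV'] with x hx hx'
    simp only [hfx]
    have hfnn : ∀ l, 0 ≤ stick V l x * A.indicator 1 (θ l x) := fun l =>
      mul_nonneg (stick_nonneg V x hx l) (hind_nn _ _)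
    have hgnn : ∀ l, 0 ≤ stick V' l x * B.indicator 1 (θ l x) := fun l =>
      mul_nonneg (stick_nonneg V' x hx' l) (hind_nn _ _)
    have hfle : ∀ l, stick V l x * A.indicator 1 (θ l x) ≤ stick V l x := fun l =>
      mul_le_of_le_one_right (stick_nonneg V x hx l) (hind_le _ _)
    have hgle : ∀ l, stick V' l x * B.indicator 1 (θ l x) ≤ stick V' l x := fun l =>
      mul_le_of_le_one_right (stick_nonneg V' x hx' l) (hind_le _ _)
    have hsf : Summable (fun l => stick V l x * A.indicator 1 (θ l x)) :=
      Summable.of_nonneg_of_le hfnn hfle (stick_summable V x hx)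
    have hsg : Summable (fun l => stick V' l x * B.indicator 1 (θ l x)) :=
      Summable.of_nonneg_of_le hgnn hgle (stick_summable V' x hx')
    exact hsf.tsum_mul_tsum hsg (hsf.mul_of_nonneg hsg (fun l => hfnn l) (fun l => hgnn l))
  rw [integral_congr_ae hstep1]
  -- measurability of each term
  have hmf : ∀ p : ℕ × ℕ, Measurable (fun x => (stick V p.1 x * A.indicator 1 (θ p.1 x)) *
      (stick V' p.2 x * B.indicator 1 (θ p.2 x))) := fun p =>
    ((hmst p.1).mul ((measurable_one.indicator hA).comp (hmθ p.1))).mul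
      ((hmst' p.2).mul ((measurable_one.indicator hB).comp (hmθ p.2)))
  -- the "universal" key: expectation of the product of sticks
  have hkeyuniv : ∀ l m : ℕ, (∫ x, stick V l x * stick V' m x ∂μ)
      = (c * a ^ l) * (c * a ^ m) := by
    intro l m
    have h := key l m Set.univ Set.univ MeasurableSet.univ MeasurableSet.univ
    simp only [Set.indicator_univ, Pi.one_apply, mul_one, Set.univ_inter, measure_univ,
      ENNReal.toReal_one, one_mul, ite_self] at h
    exact h
  -- integrability of the stick products
  have hint2 : ∀ l m : ℕ, Integrable (fun x => stick V l x * stick V' m x) μ := by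
    intro l m
    refine ⟨((hmst l).mul (hmst' m)).aestronglyMeasurable,
      HasFiniteIntegral.of_bounded (C := 1) ?_⟩
    filter_upwards [haeV, haeV'] with x hx hx'
    rw [Real.norm_eq_abs, abs_mul, abs_of_nonneg (stick_nonneg V x hx l),
      abs_of_nonneg (stick_nonneg V' x hx' m)]
    calc stick V l x * stick V' m x ≤ 1 * stick V' m x :=
          mul_le_mul_of_nonneg_right (stick_le_one V x hx l) (stick_nonneg V' x hx' m)
      _ ≤ 1 := by rw [one_mul]; exact stick_le_one V' x hx' m
  -- the domination bound
  have hbound : ∀ p : ℕ × ℕ,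
      (∫⁻ x, ‖(stick V p.1 x * A.indicator 1 (θ p.1 x)) *
        (stick V' p.2 x * B.indicator 1 (θ p.2 x))‖ₑ ∂μ)
        ≤ ENNReal.ofReal ((c * a ^ p.1) * (c * a ^ p.2)) := by
    intro p
    rw [← hkeyuniv p.1 p.2, ofReal_integral_eq_lintegral_ofReal (hint2 p.1 p.2)
      (by filter_upwards [haeV, haeV'] with x hx hx'
          exact mul_nonneg (stick_nonneg V x hx p.1) (stick_nonneg V' x hx' p.2))]
    refine lintegral_mono_ae ?_
    filter_upwards [haeV, haeV'] with x hx hx'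
    rw [Real.enorm_eq_ofReal_abs]
    refine ENNReal.ofReal_le_ofReal ?_
    have hfnn : 0 ≤ stick V p.1 x * A.indicator 1 (θ p.1 x) :=
      mul_nonneg (stick_nonneg V x hx p.1) (hind_nn _ _)
    have hgnn : 0 ≤ stick V' p.2 x * B.indicator 1 (θ p.2 x) :=
      mul_nonneg (stick_nonneg V' x hx' p.2) (hind_nn _ _)
    rw [abs_of_nonneg (mul_nonneg hfnn hgnn)]
    exact mul_le_mul
      (mul_le_of_le_one_right (stick_nonneg V x hx p.1) (hind_le _ _))
      (mul_le_of_le_one_right (stick_nonneg V' x hx' p.2) (hind_le _ _))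
      hgnn (stick_nonneg V x hx p.1)
  -- finiteness of the sum of lintegrals
  have hsum1 : (∑' l : ℕ, ENNReal.ofReal (c * a ^ l)) ≠ ⊤ := by
    have h0 : ∀ l : ℕ, ENNReal.ofReal (c * a ^ l)
        = ENNReal.ofReal c * ENNReal.ofReal a ^ l := by
      intro l
      rw [ENNReal.ofReal_mul hc0.le, ENNReal.ofReal_pow ha0]
    rw [tsum_congr h0, ENNReal.tsum_mul_left, ENNReal.tsum_geometric]
    refine ENNReal.mul_ne_top ENNReal.ofReal_ne_top ?_
    simp only [Ne, ENNReal.inv_eq_top, tsub_eq_zero_iff_le, not_le]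
    exact ENNReal.ofReal_lt_one.mpr ha1
  have htop : (∑' p : ℕ × ℕ, ∫⁻ x, ‖(stick V p.1 x * A.indicator 1 (θ p.1 x)) *
      (stick V' p.2 x * B.indicator 1 (θ p.2 x))‖ₑ ∂μ) ≠ ⊤ := by
    refine ne_top_of_le_ne_top ?_ (ENNReal.tsum_le_tsum hbound)
    have h0 : ∀ p : ℕ × ℕ, ENNReal.ofReal ((c * a ^ p.1) * (c * a ^ p.2))
        = ENNReal.ofReal (c * a ^ p.1) * ENNReal.ofReal (c * a ^ p.2) := fun p =>
      ENNReal.ofReal_mul (by positivity)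
    rw [tsum_congr h0, ENNReal.tsum_prod']
    have h1 : ∀ l : ℕ, (∑' m : ℕ, ENNReal.ofReal (c * a ^ l) * ENNReal.ofReal (c * a ^ m))
        = ENNReal.ofReal (c * a ^ l) * ∑' m : ℕ, ENNReal.ofReal (c * a ^ m) := fun l =>
      ENNReal.tsum_mul_left
    rw [tsum_congr h1, ENNReal.tsum_mul_right]
    exact ENNReal.mul_ne_top hsum1 hsum1
  rw [integral_tsum (fun p => (hmf p).aestronglyMeasurable) htop]
  -- evaluate each term
  have hterm : ∀ p : ℕ × ℕ, (∫ x, (stick V p.1 x * A.indicator 1 (θ p.1 x)) *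
      (stick V' p.2 x * B.indicator 1 (θ p.2 x)) ∂μ)
      = (c * a ^ p.1) * (c * a ^ p.2) *
        (if p.1 = p.2 then (H (A ∩ B)).toReal else (H A).toReal * (H B).toReal) := fun p =>
    key p.1 p.2 A B hA hB
  rw [tsum_congr hterm]
  -- final summation
  set rA := (H A).toReal with hrA_def
  set rB := (H B).toReal with hrB_def
  set rAB := (H (A ∩ B)).toReal with hrAB_def
  have hrA0 : 0 ≤ rA := ENNReal.toReal_nonneg
  have hrB0 : 0 ≤ rB := ENNReal.toReal_nonneg
  have hs1 : Summable (fun l : ℕ => c * a ^ l) :=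
    (summable_geometric_of_lt_one ha0 ha1).mul_left c
  have hsA : Summable (fun l : ℕ => c * a ^ l * rA) := hs1.mul_right rA
  have hsB : Summable (fun l : ℕ => c * a ^ l * rB) := hs1.mul_right rB
  have hgeo : (∑' l : ℕ, c * a ^ l) = 1 := by
    rw [tsum_mul_left, tsum_geometric_of_lt_one ha0 ha1, h1a, mul_inv_cancel₀ hc0.ne']
  have hSA : (∑' l : ℕ, c * a ^ l * rA) = rA := by
    rw [tsum_mul_right, hgeo, one_mul]
  have hSB : (∑' l : ℕ, c * a ^ l * rB) = rB := by
    rw [tsum_mul_right, hgeo, one_mul]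
  have hprodSummable : Summable (fun p : ℕ × ℕ => (c * a ^ p.1 * rA) * (c * a ^ p.2 * rB)) :=
    hsA.mul_of_nonneg hsB (fun l => by positivity) (fun l => by positivity)
  have hD : HasSum (fun p : ℕ × ℕ =>
      if p.1 = p.2 then (c * a ^ p.1) * (c * a ^ p.1) * (rAB - rA * rB) else 0)
      (c ^ 2 * (1 - a ^ 2)⁻¹ * (rAB - rA * rB)) := by
    have hj : Function.Injective (fun l : ℕ => ((l, l) : ℕ × ℕ)) := fun p q h => by
      simpa using congrArg Prod.fst h
    have hzero : ∀ p : ℕ × ℕ, p ∉ Set.range (fun l : ℕ => ((l, l) : ℕ × ℕ)) →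
        (if p.1 = p.2 then (c * a ^ p.1) * (c * a ^ p.1) * (rAB - rA * rB) else 0) = 0 := by
      intro p hp
      rw [if_neg]
      intro h
      exact hp ⟨p.1, by rw [Prod.ext_iff]; exact ⟨rfl, h⟩⟩
    refine (hj.hasSum_iff hzero).mp ?_
    have hgeo2 : HasSum (fun l : ℕ => (a ^ 2) ^ l) ((1 - a ^ 2)⁻¹) :=
      hasSum_geometric_of_lt_one (by positivity) (by nlinarith)
    have h2 := (hgeo2.mul_left (c ^ 2)).mul_right (rAB - rA * rB)
    convert h2 using 1
    · rfl
    funext l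
    show (if l = l then (c * a ^ l) * (c * a ^ l) * (rAB - rA * rB) else 0)
      = c ^ 2 * (a ^ 2) ^ l * (rAB - rA * rB)
    rw [if_pos rfl, ← pow_mul]
    ring
  have hsplit : ∀ p : ℕ × ℕ, (c * a ^ p.1) * (c * a ^ p.2) *
      (if p.1 = p.2 then rAB else rA * rB)
      = (c * a ^ p.1 * rA) * (c * a ^ p.2 * rB)
        + (if p.1 = p.2 then (c * a ^ p.1) * (c * a ^ p.1) * (rAB - rA * rB) else 0) := by
    intro p
    rcases eq_or_ne p.1 p.2 with h | h
    · rw [if_pos h, if_pos h, ← h]; ring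
    · rw [if_neg h, if_neg h]; ring
  rw [tsum_congr hsplit, hprodSummable.tsum_add hD.summable, hD.tsum_eq,
    ← hsA.tsum_mul_tsum hsB hprodSummable, hSA, hSB]
  -- final algebra
  have h2β : (0:ℝ) < 1 + 2 * β := by linarith
  have hval : c ^ 2 * (1 - a ^ 2)⁻¹ = 1 / (1 + 2 * β) := by
    have ha2 : 1 - a ^ 2 = (1 + 2 * β) / ((1 + β) ^ 2) := by
      rw [ha_def]; field_simp; ring
    rw [ha2, hc_def]
    field_simp
  rw [hval]
  field_simp
  ring
end

section
/- Consider the Common Atoms Model with parameters α, β > 0 on a measurable space X with measurable singletons and atomless base probability measure H: let (π_k)_{k≥1} be GEM(α) weights; let (ω_{l,k})_{l≥1}, for k ≥ 1, be mutually independent GEM(β) weight sequences; let (θ_l)_{l≥1} be i.i.d. with law H; all jointly independent. Set G*_k = ∑_{l≥1} ω_{l,k} δ_{θ_l}, q1 = 1/(1+α), and for a measurable set A define the covariance C(A) = E[∑_{k1,k2} π_{k1} π_{k2} G*_{k1}(A) G*_{k2}(A)] − H(A)² and the variance V(A) = E[G*_1(A)²] − H(A)². Then for every measurable set A with 0 <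 H(A) < 1, the correlation C(A)/V(A) equals 1 − (β/(2β+1))·(α/(1+α)); in particular it does not depend on A. -/
open MeasureTheory ProbabilityTheory

/-- Index family for joint independence of the distributional sticks (ℝ-valued, first
block), all the observational sticks (ℝ-valued, second block, indexed by
(sequence, position)), and the common atoms (X-valued, third block). -/
abbrev famCAM (X : Type) : ℕ ⊕ (ℕ × ℕ) ⊕ ℕ → Type :=
  Sum.elim (fun _ => ℝ) (Sum.elim (fun _ => ℝ) (fun _ => X))

/-- Measurable-space structure on the family. -/
noncomputable def famCAMMS (X : Type) [mX : MeasurableSpace X] :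
    ∀ i, MeasurableSpace (famCAM X i)
  | .inl _ => inferInstanceAs (MeasurableSpace ℝ)
  | .inr (.inl _) => inferInstanceAs (MeasurableSpace ℝ)
  | .inr (.inr _) => mX

/-- The combined process of all sticks and atoms of the Common Atoms Model. -/
def famCAMF {Ω : Type*} {X : Type} (V : ℕ → Ω → ℝ) (W : ℕ → ℕ → Ω → ℝ)
    (θ : ℕ → Ω → X) : ∀ i, Ω → famCAM X i
  | .inl k => V k
  | .inr (.inl p) => W p.1 p.2
  | .inr (.inr l) => θ l


-- ===== auxiliary lemmas =====
section AUX
open MeasureTheory ProbabilityTheory intervalIntegral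

lemma lintegral_prod_of_iIndepFun {Ω ι : Type*} [MeasurableSpace Ω] {μ : Measure Ω}
    [IsProbabilityMeasure μ]
    {β : ι → Type*} {m : ∀ i, MeasurableSpace (β i)} {f : ∀ i, Ω → β i}
    (hindep : iIndepFun (m := m) f μ) (hf : ∀ i, Measurable (f i))
    (s : Finset ι) (g : ∀ i, β i → ENNReal) (hg : ∀ i, Measurable (g i)) :
    ∫⁻ x, ∏ i ∈ s, g i (f i x) ∂μ = ∏ i ∈ s, ∫⁻ x, g i (f i x) ∂μ := by
  classical
  induction s using Finset.induction_on with
  | empty => simp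
  | @insert i s his ih =>
    simp only [Finset.prod_insert his]
    have hIF : IndepFun (fun a (j : ({i} : Finset ι)) => f j a)
        (fun a (j : s) => f j a) μ :=
      hindep.indepFun_finset {i} s (by simpa using his) hf
    have h1 : IndepFun (fun x => g i (f i x)) (fun x => ∏ j ∈ s, g j (f j x)) μ := by
      have hφ : Measurable (fun v : (∀ j : ({i} : Finset ι), β j) =>
          g i (v ⟨i, Finset.mem_singleton_self i⟩)) :=
        (hg i).comp (measurable_pi_apply _)
      have hψ : Measurable (fun v : (∀ j : s, β j) => ∏ j ∈ s.attach, g j (v j)) :=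
        Finset.measurable_prod _ (fun j _ => (hg j).comp (measurable_pi_apply j))
      have := hIF.comp hφ hψ
      have heq : (fun x => ∏ j ∈ s, g j (f j x)) =
          ((fun v : (∀ j : s, β j) => ∏ j ∈ s.attach, g j (v j)) ∘ fun a (j : s) => f j a) := by
        funext x
        simp [Function.comp, Finset.prod_attach s (fun j => g j (f j x))]
      rw [show (fun x => g i (f i x)) =
          ((fun v : (∀ j : ({i} : Finset ι), β j) => g i (v ⟨i, Finset.mem_singleton_self i⟩)) ∘
            fun a (j : ({i} : Finset ι)) => f j a) from rfl, heq]
      exact this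
    have h2 := lintegral_mul_eq_lintegral_mul_lintegral_of_indepFun
      ((hg i).comp (hf i))
      (Finset.measurable_prod s (fun j _ => (hg j).comp (hf j))) h1
    simp only [Pi.mul_apply, Function.comp_apply] at h2
    rw [h2, ih]

lemma tsum_shift_geom (K r : ENNReal) (l : ℕ) :
    ∑' l' : ℕ, (if l < l' then K * r ^ (l' - l - 1) else 0) = K * (1 - r)⁻¹ := by
  have hinj : Function.Injective (fun d : ℕ => l + 1 + d) := fun a b h => by simpa using h
  rw [← Function.Injective.tsum_eq hinj (f := fun l' : ℕ =>
      (if l < l' then K * r ^ (l' - l - 1) else 0))]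
  · have hcomp : ∀ d : ℕ, (if l < l + 1 + d then K * r ^ (l + 1 + d - l - 1) else 0)
        = K * r ^ d := by
      intro d
      rw [if_pos (show l < l + 1 + d by omega), show l + 1 + d - l - 1 = d from by omega]
    simp only [hcomp]
    rw [ENNReal.tsum_mul_left, ENNReal.tsum_geometric]
  · intro l' hl'
    simp only [Function.mem_support] at hl'
    by_cases h : l < l'
    · exact ⟨l' - l - 1, by show l + 1 + (l' - l - 1) = l'; omega⟩
    · simp [h] at hl'

lemma master_tsum (u0 r1 K r2 c c' : ENNReal) :
    (∑' (l : ℕ) (l' : ℕ), (if l = l' then u0 * r1 ^ l * c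
      else K * r1 ^ (min l l') * r2 ^ (max l l' - min l l' - 1) * c'))
    = u0 * (1 - r1)⁻¹ * c + (2 * K * ((1 - r1)⁻¹ * (1 - r2)⁻¹)) * c' := by
  have hsplit : ∀ l l' : ℕ, (if l = l' then u0 * r1 ^ l * c
      else K * r1 ^ (min l l') * r2 ^ (max l l' - min l l' - 1) * c')
      = (if l' = l then u0 * r1 ^ l * c else 0)
        + (if l' < l then K * r1 ^ l' * r2 ^ (l - l' - 1) * c' else 0)
        + (if l < l' then K * r1 ^ l * r2 ^ (l' - l - 1) * c' else 0) := by
    intro l l'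
    rcases lt_trichotomy l l' with h | h | h
    · simp only [if_neg (show ¬ l = l' by omega), if_neg (show ¬ l' = l by omega),
        if_neg (show ¬ l' < l by omega), if_pos h, min_eq_left h.le, max_eq_right h.le,
        zero_add, add_zero]
    · subst h; simp
    · simp only [if_neg (show ¬ l = l' by omega), if_neg (show ¬ l < l' by omega),
        if_pos (show l' < l from h), if_neg (show ¬ l' = l by omega),
        min_eq_right h.le, max_eq_left h.le, zero_add, add_zero]
  simp only [hsplit, ENNReal.tsum_add]
  have h1 : ∀ l : ℕ, ∑' l' : ℕ, (if l' = l then u0 * r1 ^ l * c else 0)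
      = u0 * r1 ^ l * c := fun l => tsum_ite_eq l _
  have h3 : ∀ l : ℕ, ∑' l' : ℕ, (if l < l' then K * r1 ^ l * r2 ^ (l' - l - 1) * c' else 0)
      = (K * r1 ^ l * c') * (1 - r2)⁻¹ := by
    intro l
    have := tsum_shift_geom (K * r1 ^ l * c') r2 l
    rw [← this]
    congr 1; funext l'
    split_ifs with h
    · ring
    · rfl
  simp only [h1, h3]
  have e1 : ∑' l : ℕ, u0 * r1 ^ l * c = u0 * (1 - r1)⁻¹ * c := by
    calc ∑' l : ℕ, u0 * r1 ^ l * c = ∑' l : ℕ, (u0 * c) * r1 ^ l := by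
          congr 1; funext l; ring
    _ = (u0 * c) * (1 - r1)⁻¹ := by rw [ENNReal.tsum_mul_left, ENNReal.tsum_geometric]
    _ = u0 * (1 - r1)⁻¹ * c := by ring
  have e2 : ∑' (l : ℕ) (l' : ℕ), (if l' < l then K * r1 ^ l' * r2 ^ (l - l' - 1) * c' else 0)
      = (K * c') * ((1 - r1)⁻¹ * (1 - r2)⁻¹) := by
    rw [ENNReal.tsum_comm]
    have : ∀ l' : ℕ, ∑' l : ℕ, (if l' < l then K * r1 ^ l' * r2 ^ (l - l' - 1) * c' else 0)
        = (K * r1 ^ l' * c') * (1 - r2)⁻¹ := by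
      intro l'
      have := tsum_shift_geom (K * r1 ^ l' * c') r2 l'
      rw [← this]
      congr 1; funext l
      split_ifs with h
      · ring
      · rfl
    simp only [this]
    calc ∑' l' : ℕ, K * r1 ^ l' * c' * (1 - r2)⁻¹
        = ∑' l' : ℕ, (K * c' * (1 - r2)⁻¹) * r1 ^ l' := by congr 1; funext l'; ring
      _ = (K * c' * (1 - r2)⁻¹) * (1 - r1)⁻¹ := by
          rw [ENNReal.tsum_mul_left, ENNReal.tsum_geometric]
      _ = (K * c') * ((1 - r1)⁻¹ * (1 - r2)⁻¹) := by ring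
  have e3 : ∑' l : ℕ, (K * r1 ^ l * c') * (1 - r2)⁻¹
      = (K * c') * ((1 - r1)⁻¹ * (1 - r2)⁻¹) := by
    calc ∑' l : ℕ, (K * r1 ^ l * c') * (1 - r2)⁻¹
        = ∑' l : ℕ, (K * c' * (1 - r2)⁻¹) * r1 ^ l := by congr 1; funext l; ring
      _ = (K * c' * (1 - r2)⁻¹) * (1 - r1)⁻¹ := by
          rw [ENNReal.tsum_mul_left, ENNReal.tsum_geometric]
      _ = (K * c') * ((1 - r1)⁻¹ * (1 - r2)⁻¹) := by ring
  rw [e1, e2, e3]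
  ring
noncomputable def mom (γ : ℝ) (a b : ℕ) : ENNReal :=
  ∫⁻ x, ENNReal.ofReal x ^ a * ENNReal.ofReal (1 - x) ^ b ∂(betaOne γ)

lemma Rint (γ : ℝ) (hγ : 0 < γ) (m : ℕ) :
    IntervalIntegrable (fun u : ℝ => u ^ (γ - 1) * (u ^ m)) volume 0 1 :=
  (intervalIntegral.intervalIntegrable_rpow' (by linarith)).mul_continuousOn
    (Continuous.continuousOn (by continuity))

lemma Rval (γ : ℝ) (hγ : 0 < γ) (m : ℕ) :
    ∫ u in (0:ℝ)..1, u ^ (γ - 1) * (u ^ m) = 1 / (γ + m) := by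
  have h1 : ∫ u in (0:ℝ)..1, u ^ (γ - 1) * (u ^ m) = ∫ u in (0:ℝ)..1, u ^ (γ - 1 + m) := by
    rw [intervalIntegral.integral_of_le zero_le_one, intervalIntegral.integral_of_le zero_le_one]
    apply setIntegral_congr_fun measurableSet_Ioc
    intro u hu
    show u ^ (γ - 1) * u ^ m = u ^ (γ - 1 + (m:ℝ))
    rw [← Real.rpow_natCast u m, ← Real.rpow_add hu.1]
  have hm : (0:ℝ) ≤ m := Nat.cast_nonneg m
  rw [h1, integral_rpow (Or.inl (by linarith))]
  rw [Real.one_rpow, Real.zero_rpow (by linarith)]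
  ring_nf

lemma mom_eq (γ : ℝ) (hγ : 0 < γ) (a b : ℕ) :
    mom γ a b = ENNReal.ofReal
      (∫ u in (0:ℝ)..1, u ^ (γ - 1) * (γ * ((1 - u) ^ a * u ^ b))) := by
  have hmeasρ : Measurable (fun x : ℝ => ENNReal.ofReal (γ * (1 - x) ^ (γ - 1))) := by
    fun_prop
  have hmeasF : Measurable (fun x : ℝ => ENNReal.ofReal x ^ a * ENNReal.ofReal (1 - x) ^ b) := by
    fun_prop
  rw [mom, betaOne, lintegral_withDensity_eq_lintegral_mul _ hmeasρ hmeasF]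
  have hcongr : ∫⁻ x in Set.Icc (0:ℝ) 1,
      ((fun x => ENNReal.ofReal (γ * (1 - x) ^ (γ - 1))) *
        fun x => ENNReal.ofReal x ^ a * ENNReal.ofReal (1 - x) ^ b) x
      = ∫⁻ x in Set.Icc (0:ℝ) 1,
        ENNReal.ofReal ((1 - x) ^ (γ - 1) * (γ * (x ^ a * (1 - x) ^ b))) := by
    apply setLIntegral_congr_fun measurableSet_Icc
    intro x hx
    have h0 : (0:ℝ) ≤ x := hx.1
    have h1 : (0:ℝ) ≤ 1 - x := by linarith [hx.2]
    have h2 : (0:ℝ) ≤ (1 - x) ^ (γ - 1) := Real.rpow_nonneg h1 _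
    simp only [Pi.mul_apply]
    rw [← ENNReal.ofReal_pow h0, ← ENNReal.ofReal_pow h1, ← ENNReal.ofReal_mul (by positivity),
      ← ENNReal.ofReal_mul (by positivity)]
    ring_nf
  rw [hcongr]
  have hII : IntervalIntegrable
      (fun x : ℝ => (1 - x) ^ (γ - 1) * (γ * (x ^ a * (1 - x) ^ b))) volume 0 1 := by
    have hbase : IntervalIntegrable (fun x : ℝ => (1 - x) ^ (γ - 1)) volume 0 1 := by
      have := (intervalIntegral.intervalIntegrable_rpow'
        (show (-1:ℝ) < γ - 1 by linarith) (a := 0) (b := 1)).comp_sub_left 1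
      norm_num at this
      exact this.symm
    exact hbase.mul_continuousOn (Continuous.continuousOn (by continuity))
  have hint : IntegrableOn (fun x : ℝ => (1 - x) ^ (γ - 1) * (γ * (x ^ a * (1 - x) ^ b)))
      (Set.Icc (0:ℝ) 1) volume :=
    (intervalIntegrable_iff_integrableOn_Icc_of_le zero_le_one).mp hII
  have hnn : 0 ≤ᵐ[volume.restrict (Set.Icc (0:ℝ) 1)]
      (fun x : ℝ => (1 - x) ^ (γ - 1) * (γ * (x ^ a * (1 - x) ^ b))) := by
    refine (ae_restrict_iff' measurableSet_Icc).mpr (ae_of_all _ fun x hx => ?_)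
    have h1 : (0:ℝ) ≤ 1 - x := by linarith [hx.2]
    have h0 : (0:ℝ) ≤ x := hx.1
    have h2 : (0:ℝ) ≤ (1 - x) ^ (γ - 1) := Real.rpow_nonneg h1 _
    positivity
  rw [← ofReal_integral_eq_lintegral_ofReal hint hnn]
  congr 1
  rw [MeasureTheory.integral_Icc_eq_integral_Ioc,
    ← intervalIntegral.integral_of_le zero_le_one]
  have hsub : ∫ x in (0:ℝ)..1, (1 - x) ^ (γ - 1) * (γ * (x ^ a * (1 - x) ^ b))
      = ∫ x in (0:ℝ)..1, (fun u : ℝ => u ^ (γ - 1) * (γ * ((1 - u) ^ a * u ^ b))) (1 - x) := by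
    apply intervalIntegral.integral_congr
    intro x _
    simp [sub_sub_cancel]
  rw [hsub, intervalIntegral.integral_comp_sub_left (fun u : ℝ => u ^ (γ - 1) * (γ * ((1 - u) ^ a * u ^ b))) 1]
  norm_num

lemma Ival (γ : ℝ) (hγ : 0 < γ) (m : ℕ) :
    ∫ u in (0:ℝ)..1, γ * (u ^ (γ - 1) * u ^ m) = γ / (γ + m) := by
  rw [intervalIntegral.integral_const_mul, Rval γ hγ m]
  ring

lemma IIg (γ : ℝ) (hγ : 0 < γ) (m : ℕ) :
    IntervalIntegrable (fun u : ℝ => γ * (u ^ (γ - 1) * u ^ m)) volume 0 1 :=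
  (Rint γ hγ m).const_mul γ

lemma mom00 (γ : ℝ) (hγ : 0 < γ) : mom γ 0 0 = 1 := by
  rw [mom_eq γ hγ]
  have h1 : ∫ u in (0:ℝ)..1, u ^ (γ - 1) * (γ * ((1 - u) ^ 0 * u ^ 0))
      = ∫ u in (0:ℝ)..1, γ * (u ^ (γ - 1) * u ^ 0) :=
    intervalIntegral.integral_congr (fun u _ => by ring)
  have h2 : γ / (γ + ((0:ℕ):ℝ)) = 1 := by
    push_cast
    rw [add_zero, div_self hγ.ne']
  rw [h1, Ival γ hγ 0, h2, ENNReal.ofReal_one]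

lemma mom10 (γ : ℝ) (hγ : 0 < γ) : mom γ 1 0 = ENNReal.ofReal (1 / (γ + 1)) := by
  rw [mom_eq γ hγ]
  have h1 : ∫ u in (0:ℝ)..1, u ^ (γ - 1) * (γ * ((1 - u) ^ 1 * u ^ 0))
      = ∫ u in (0:ℝ)..1, (γ * (u ^ (γ - 1) * u ^ 0) - γ * (u ^ (γ - 1) * u ^ 1)) :=
    intervalIntegral.integral_congr (fun u _ => by ring)
  rw [h1, intervalIntegral.integral_sub (IIg γ hγ 0) (IIg γ hγ 1), Ival γ hγ 0, Ival γ hγ 1]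
  congr 1
  push_cast
  field_simp
  try ring

lemma mom01 (γ : ℝ) (hγ : 0 < γ) : mom γ 0 1 = ENNReal.ofReal (γ / (γ + 1)) := by
  rw [mom_eq γ hγ]
  have h1 : ∫ u in (0:ℝ)..1, u ^ (γ - 1) * (γ * ((1 - u) ^ 0 * u ^ 1))
      = ∫ u in (0:ℝ)..1, γ * (u ^ (γ - 1) * u ^ 1) :=
    intervalIntegral.integral_congr (fun u _ => by ring)
  rw [h1, Ival γ hγ 1]
  norm_num

lemma mom02 (γ : ℝ) (hγ : 0 < γ) : mom γ 0 2 = ENNReal.ofReal (γ / (γ + 2)) := by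
  rw [mom_eq γ hγ]
  have h1 : ∫ u in (0:ℝ)..1, u ^ (γ - 1) * (γ * ((1 - u) ^ 0 * u ^ 2))
      = ∫ u in (0:ℝ)..1, γ * (u ^ (γ - 1) * u ^ 2) :=
    intervalIntegral.integral_congr (fun u _ => by ring)
  rw [h1, Ival γ hγ 2]
  norm_num

lemma mom11 (γ : ℝ) (hγ : 0 < γ) : mom γ 1 1 = ENNReal.ofReal (γ / ((γ + 1) * (γ + 2))) := by
  rw [mom_eq γ hγ]
  have h1 : ∫ u in (0:ℝ)..1, u ^ (γ - 1) * (γ * ((1 - u) ^ 1 * u ^ 1))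
      = ∫ u in (0:ℝ)..1, (γ * (u ^ (γ - 1) * u ^ 1) - γ * (u ^ (γ - 1) * u ^ 2)) :=
    intervalIntegral.integral_congr (fun u _ => by ring)
  rw [h1, intervalIntegral.integral_sub (IIg γ hγ 1) (IIg γ hγ 2), Ival γ hγ 1, Ival γ hγ 2]
  congr 1
  push_cast
  field_simp
  try ring

lemma mom20 (γ : ℝ) (hγ : 0 < γ) : mom γ 2 0 = ENNReal.ofReal (2 / ((γ + 1) * (γ + 2))) := by
  rw [mom_eq γ hγ]
  have h1 : ∫ u in (0:ℝ)..1, u ^ (γ - 1) * (γ * ((1 - u) ^ 2 * u ^ 0))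
      = ∫ u in (0:ℝ)..1, ((γ * (u ^ (γ - 1) * u ^ 0) - 2 * (γ * (u ^ (γ - 1) * u ^ 1)))
          + γ * (u ^ (γ - 1) * u ^ 2)) :=
    intervalIntegral.integral_congr (fun u _ => by ring)
  have h2 : ∫ u in (0:ℝ)..1, 2 * (γ * (u ^ (γ - 1) * u ^ 1)) = 2 * (γ / (γ + (1:ℕ))) := by
    rw [intervalIntegral.integral_const_mul, Ival γ hγ 1]
  rw [h1, intervalIntegral.integral_add (((IIg γ hγ 0)).sub ((IIg γ hγ 1).const_mul 2))
      (IIg γ hγ 2),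
    intervalIntegral.integral_sub (IIg γ hγ 0) ((IIg γ hγ 1).const_mul 2),
    h2, Ival γ hγ 0, Ival γ hγ 2]
  congr 1
  push_cast
  field_simp
  try ring

lemma prod_single_marker (v : ℕ → ℕ → ENNReal) (hv : v 0 0 = 1) (l : ℕ) :
    ∀ N, l < N → ∏ i ∈ Finset.range N, v (if i = l then 1 else 0) (if i < l then 1 else 0)
      = v 1 0 * v 0 1 ^ l := by
  intro N
  induction N with
  | zero => omega
  | succ n ih =>
    intro hln
    rcases Nat.lt_or_ge l n with h | h
    · rw [Finset.prod_range_succ, ih h, if_neg (show ¬ n = l by omega),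
        if_neg (show ¬ n < l by omega), hv, mul_one]
    · have hl : l = n := by omega
      subst hl
      rw [Finset.prod_range_succ, if_pos (show l = l from rfl), if_neg (show ¬ l < l by omega)]
      have h2 : ∏ i ∈ Finset.range l, v (if i = l then 1 else 0) (if i < l then 1 else 0)
          = v 0 1 ^ l := by
        rw [Finset.prod_congr rfl (fun i hi => by
          rw [if_neg (show ¬ i = l by simp at hi; omega), if_pos (by simpa using hi)]),
          Finset.prod_const, Finset.card_range]
      rw [h2]
      ring

lemma prod_mark_shift (v : ℕ → ℕ → ENNReal) (k1 : ℕ) :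
    ∀ n, k1 < n → ∏ i ∈ Finset.range n, v (if i = k1 then 1 else 0) ((if i < k1 then 1 else 0) + 1)
      = v 1 1 * v 0 2 ^ k1 * v 0 1 ^ (n - k1 - 1) := by
  intro n
  induction n with
  | zero => omega
  | succ m ih =>
    intro hm
    rcases Nat.lt_or_ge k1 m with h | h
    · rw [Finset.prod_range_succ, ih h, if_neg (show ¬ m = k1 by omega),
        if_neg (show ¬ m < k1 by omega)]
      have he : m + 1 - k1 - 1 = (m - k1 - 1) + 1 := by omega
      rw [he, pow_succ]
      ring
    · have hk : k1 = m := by omega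
      subst hk
      rw [Finset.prod_range_succ, if_pos (show k1 = k1 from rfl),
        if_neg (show ¬ k1 < k1 by omega)]
      have h2 : ∏ i ∈ Finset.range k1,
          v (if i = k1 then 1 else 0) ((if i < k1 then 1 else 0) + 1) = v 0 2 ^ k1 := by
        rw [Finset.prod_congr rfl (fun i hi => by
          rw [if_neg (show ¬ i = k1 by simp at hi; omega), if_pos (by simpa using hi)]),
          Finset.prod_const, Finset.card_range]
      rw [h2, show k1 + 1 - k1 - 1 = 0 from by omega, pow_zero]
      ring

lemma prod_pair_le (v : ℕ → ℕ → ENNReal) (hv : v 0 0 = 1) (k1 k2 : ℕ) (h12 : k1 ≤ k2) :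
    ∀ N, k2 < N → ∏ i ∈ Finset.range N,
        v ((if i = k1 then 1 else 0) + (if i = k2 then 1 else 0))
          ((if i < k1 then 1 else 0) + (if i < k2 then 1 else 0))
      = if k1 = k2 then v 2 0 * v 0 2 ^ k1
        else v 1 1 * v 1 0 * v 0 2 ^ k1 * v 0 1 ^ (k2 - k1 - 1) := by
  intro N
  induction N with
  | zero => omega
  | succ n ih =>
    intro hn
    rcases Nat.lt_or_ge k2 n with h | h
    · rw [Finset.prod_range_succ, ih h, if_neg (show ¬ n = k1 by omega),
        if_neg (show ¬ n = k2 by omega), if_neg (show ¬ n < k1 by omega),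
        if_neg (show ¬ n < k2 by omega), hv, mul_one]
    · have hk : k2 = n := by omega
      subst hk
      rcases Nat.eq_or_lt_of_le h12 with he | hlt
      · subst he
        rw [Finset.prod_range_succ, if_pos (show k1 = k1 from rfl),
          if_neg (show ¬ k1 < k1 by omega), if_pos (show (k1:ℕ) = k1 from rfl)]
        have h2 : ∏ i ∈ Finset.range k1,
            v ((if i = k1 then 1 else 0) + (if i = k1 then 1 else 0))
              ((if i < k1 then 1 else 0) + (if i < k1 then 1 else 0)) = v 0 2 ^ k1 := by
          rw [Finset.prod_congr rfl (fun i hi => by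
            rw [if_neg (show ¬ i = k1 by simp at hi; omega), if_pos (by simpa using hi)]),
            Finset.prod_const, Finset.card_range]
        rw [h2]
        ring
      · rw [Finset.prod_range_succ, if_neg (show ¬ k2 = k1 by omega),
          if_pos (show k2 = k2 from rfl), if_neg (show ¬ k2 < k1 by omega),
          if_neg (show ¬ k2 < k2 by omega)]
        have h2 : ∏ i ∈ Finset.range k2,
            v ((if i = k1 then 1 else 0) + (if i = k2 then 1 else 0))
              ((if i < k1 then 1 else 0) + (if i < k2 then 1 else 0))
            = ∏ i ∈ Finset.range k2,
              v (if i = k1 then 1 else 0) ((if i < k1 then 1 else 0) + 1) := by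
          apply Finset.prod_congr rfl
          intro i hi
          simp only [Finset.mem_range] at hi
          rw [if_neg (show ¬ i = k2 by omega), if_pos hi, add_zero]
        rw [h2, prod_mark_shift v k1 k2 hlt, if_neg (show ¬ k1 = k2 by omega)]
        ring

lemma filter_lt_range (N k : ℕ) (h : k ≤ N) :
    (Finset.range N).filter (· < k) = Finset.range k := by
  ext i
  simp only [Finset.mem_filter, Finset.mem_range]
  omega

lemma pointwise_single (p q : ℕ → ENNReal) (k N : ℕ) (hk : k < N) :
    ∏ i ∈ Finset.range N, (p i ^ (if i = k then 1 else 0) * q i ^ (if i < k then 1 else 0))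
      = p k * ∏ i ∈ Finset.range k, q i := by
  rw [Finset.prod_mul_distrib]
  congr 1
  · have h1 : ∀ i ∈ Finset.range N, p i ^ (if i = k then 1 else 0)
        = if i = k then p i else 1 := by
      intro i _
      split_ifs <;> simp
    rw [Finset.prod_congr rfl h1, Finset.prod_ite_eq' (Finset.range N) k p,
      if_pos (Finset.mem_range.mpr hk)]
  · have h1 : ∀ i ∈ Finset.range N, q i ^ (if i < k then 1 else 0)
        = if i < k then q i else 1 := by
      intro i _
      split_ifs <;> simp
    rw [Finset.prod_congr rfl h1, ← Finset.prod_filter, filter_lt_range N k hk.le]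

lemma pointwise_pair (p q : ℕ → ENNReal) (k1 k2 N : ℕ) (h1 : k1 < N) (h2 : k2 < N) :
    ∏ i ∈ Finset.range N,
        (p i ^ ((if i = k1 then 1 else 0) + (if i = k2 then 1 else 0))
          * q i ^ ((if i < k1 then 1 else 0) + (if i < k2 then 1 else 0)))
      = (p k1 * ∏ i ∈ Finset.range k1, q i) * (p k2 * ∏ i ∈ Finset.range k2, q i) := by
  have key : ∀ i ∈ Finset.range N,
      p i ^ ((if i = k1 then 1 else 0) + (if i = k2 then 1 else 0))
        * q i ^ ((if i < k1 then 1 else 0) + (if i < k2 then 1 else 0))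
      = (p i ^ (if i = k1 then 1 else 0) * q i ^ (if i < k1 then 1 else 0))
        * (p i ^ (if i = k2 then 1 else 0) * q i ^ (if i < k2 then 1 else 0)) := by
    intro i _
    rw [pow_add, pow_add]
    ring
  rw [Finset.prod_congr rfl key, Finset.prod_mul_distrib,
    pointwise_single p q k1 N h1, pointwise_single p q k2 N h2]

noncomputable def Dv (v : ℕ → ℕ → ENNReal) (k1 k2 : ℕ) : ENNReal :=
  if k1 = k2 then v 2 0 * v 0 2 ^ k1
  else v 1 1 * v 1 0 * v 0 2 ^ (min k1 k2) * v 0 1 ^ (max k1 k2 - min k1 k2 - 1)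

lemma prod_pair_sym (v : ℕ → ℕ → ENNReal) (hv : v 0 0 = 1) (k1 k2 N : ℕ)
    (h1 : k1 < N) (h2 : k2 < N) :
    ∏ i ∈ Finset.range N,
        v ((if i = k1 then 1 else 0) + (if i = k2 then 1 else 0))
          ((if i < k1 then 1 else 0) + (if i < k2 then 1 else 0)) = Dv v k1 k2 := by
  rcases le_total k1 k2 with h | h
  · rw [prod_pair_le v hv k1 k2 h N h2, Dv]
    rcases eq_or_ne k1 k2 with he | hne
    · simp [he]
    · rw [if_neg hne, if_neg hne, min_eq_left h, max_eq_right h]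
  · rw [Finset.prod_congr rfl (fun i _ => by
      rw [add_comm (if i = k1 then 1 else 0), add_comm (if i < k1 then 1 else 0)]),
      prod_pair_le v hv k2 k1 h N h1, Dv]
    rcases eq_or_ne k2 k1 with he | hne
    · simp [he]
    · rw [if_neg hne, if_neg (Ne.symm hne), min_eq_right h, max_eq_left h]

lemma pointwise_grid_single (P Q : ℕ → ℕ → ENNReal) (k l N : ℕ) (hk : k < N) (hl : l < N) :
    ∏ p ∈ Finset.range N ×ˢ Finset.range N,
      (P p.1 p.2 ^ (if p.1 = k ∧ p.2 = l then 1 else 0)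
        * Q p.1 p.2 ^ (if p.1 = k ∧ p.2 < l then 1 else 0))
    = P k l * ∏ i ∈ Finset.range l, Q k i := by
  rw [Finset.prod_product' (f := fun k' i => P k' i ^ (if k' = k ∧ i = l then 1 else 0)
    * Q k' i ^ (if k' = k ∧ i < l then 1 else 0))]
  have hinner : ∀ k' ∈ Finset.range N,
      (∏ i ∈ Finset.range N, (P k' i ^ (if k' = k ∧ i = l then 1 else 0)
        * Q k' i ^ (if k' = k ∧ i < l then 1 else 0)))
      = if k' = k then P k l * ∏ i ∈ Finset.range l, Q k i else 1 := by
    intro k' _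
    by_cases hk' : k' = k
    · subst hk'
      rw [if_pos rfl]
      have hc : ∀ i ∈ Finset.range N,
          P k' i ^ (if k' = k' ∧ i = l then 1 else 0)
            * Q k' i ^ (if k' = k' ∧ i < l then 1 else 0)
          = P k' i ^ (if i = l then 1 else 0) * Q k' i ^ (if i < l then 1 else 0) := by
        intro i _
        simp
      rw [Finset.prod_congr rfl hc, pointwise_single (P k') (Q k') l N hl]
    · rw [if_neg hk']
      apply Finset.prod_eq_one
      intro i _
      rw [if_neg (by tauto), if_neg (by tauto)]
      simp
  rw [Finset.prod_congr rfl hinner, Finset.prod_ite_eq' (Finset.range N) k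
    (fun _ => P k l * ∏ i ∈ Finset.range l, Q k i), if_pos (Finset.mem_range.mpr hk)]

lemma pointwise_grid (P Q : ℕ → ℕ → ENNReal) (k1 k2 l l' N : ℕ)
    (hk1 : k1 < N) (hk2 : k2 < N) (hl : l < N) (hl' : l' < N) :
    ∏ p ∈ Finset.range N ×ˢ Finset.range N,
      (P p.1 p.2 ^ ((if p.1 = k1 ∧ p.2 = l then 1 else 0)
          + (if p.1 = k2 ∧ p.2 = l' then 1 else 0))
        * Q p.1 p.2 ^ ((if p.1 = k1 ∧ p.2 < l then 1 else 0)
          + (if p.1 = k2 ∧ p.2 < l' then 1 else 0)))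
    = (P k1 l * ∏ i ∈ Finset.range l, Q k1 i) * (P k2 l' * ∏ i ∈ Finset.range l', Q k2 i) := by
  have key : ∀ p ∈ Finset.range N ×ˢ Finset.range N,
      P p.1 p.2 ^ ((if p.1 = k1 ∧ p.2 = l then 1 else 0)
          + (if p.1 = k2 ∧ p.2 = l' then 1 else 0))
        * Q p.1 p.2 ^ ((if p.1 = k1 ∧ p.2 < l then 1 else 0)
          + (if p.1 = k2 ∧ p.2 < l' then 1 else 0))
      = (P p.1 p.2 ^ (if p.1 = k1 ∧ p.2 = l then 1 else 0)
          * Q p.1 p.2 ^ (if p.1 = k1 ∧ p.2 < l then 1 else 0))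
        * (P p.1 p.2 ^ (if p.1 = k2 ∧ p.2 = l' then 1 else 0)
          * Q p.1 p.2 ^ (if p.1 = k2 ∧ p.2 < l' then 1 else 0)) := by
    intro p _
    rw [pow_add, pow_add]
    ring
  rw [Finset.prod_congr rfl key, Finset.prod_mul_distrib,
    pointwise_grid_single P Q k1 l N hk1 hl, pointwise_grid_single P Q k2 l' N hk2 hl']

lemma moment_grid (v : ℕ → ℕ → ENNReal) (hv : v 0 0 = 1) (k1 k2 l l' N : ℕ)
    (hk1 : k1 < N) (hk2 : k2 < N) (hl : l < N) (hl' : l' < N) :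
    ∏ p ∈ Finset.range N ×ˢ Finset.range N,
      v ((if p.1 = k1 ∧ p.2 = l then 1 else 0) + (if p.1 = k2 ∧ p.2 = l' then 1 else 0))
        ((if p.1 = k1 ∧ p.2 < l then 1 else 0) + (if p.1 = k2 ∧ p.2 < l' then 1 else 0))
    = if k1 = k2 then Dv v l l' else (v 1 0 * v 0 1 ^ l) * (v 1 0 * v 0 1 ^ l') := by
  rw [Finset.prod_product' (f := fun k' i =>
    v ((if k' = k1 ∧ i = l then 1 else 0) + (if k' = k2 ∧ i = l' then 1 else 0))
      ((if k' = k1 ∧ i < l then 1 else 0) + (if k' = k2 ∧ i < l' then 1 else 0)))]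
  rcases eq_or_ne k1 k2 with he | hne
  · subst he
    rw [if_pos rfl]
    have hinner : ∀ k' ∈ Finset.range N,
        (∏ i ∈ Finset.range N,
          v ((if k' = k1 ∧ i = l then 1 else 0) + (if k' = k1 ∧ i = l' then 1 else 0))
            ((if k' = k1 ∧ i < l then 1 else 0) + (if k' = k1 ∧ i < l' then 1 else 0)))
        = if k' = k1 then Dv v l l' else 1 := by
      intro k' _
      by_cases hk' : k' = k1
      · rw [if_pos hk']
        have hc : ∀ i ∈ Finset.range N,
            v ((if k' = k1 ∧ i = l then 1 else 0) + (if k' = k1 ∧ i = l' then 1 else 0))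
              ((if k' = k1 ∧ i < l then 1 else 0) + (if k' = k1 ∧ i < l' then 1 else 0))
            = v ((if i = l then 1 else 0) + (if i = l' then 1 else 0))
                ((if i < l then 1 else 0) + (if i < l' then 1 else 0)) := by
          intro i _
          simp [hk']
        rw [Finset.prod_congr rfl hc, prod_pair_sym v hv l l' N hl hl']
      · rw [if_neg hk']
        apply Finset.prod_eq_one
        intro i _
        rw [if_neg (by tauto), if_neg (by tauto), if_neg (by tauto), if_neg (by tauto)]
        exact hv
    rw [Finset.prod_congr rfl hinner,
      Finset.prod_ite_eq' (Finset.range N) k1 (fun _ => Dv v l l'),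
      if_pos (Finset.mem_range.mpr hk1)]
  · rw [if_neg hne]
    have hinner : ∀ k' ∈ Finset.range N,
        (∏ i ∈ Finset.range N,
          v ((if k' = k1 ∧ i = l then 1 else 0) + (if k' = k2 ∧ i = l' then 1 else 0))
            ((if k' = k1 ∧ i < l then 1 else 0) + (if k' = k2 ∧ i < l' then 1 else 0)))
        = (if k' = k1 then v 1 0 * v 0 1 ^ l else 1)
          * (if k' = k2 then v 1 0 * v 0 1 ^ l' else 1) := by
      intro k' _
      by_cases h1 : k' = k1
      · have h2 : ¬ k' = k2 := by rw [h1]; exact hne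
        rw [if_pos h1, if_neg h2, mul_one]
        have hc : ∀ i ∈ Finset.range N,
            v ((if k' = k1 ∧ i = l then 1 else 0) + (if k' = k2 ∧ i = l' then 1 else 0))
              ((if k' = k1 ∧ i < l then 1 else 0) + (if k' = k2 ∧ i < l' then 1 else 0))
            = v (if i = l then 1 else 0) (if i < l then 1 else 0) := by
          intro i _
          simp [h1, h2, hne]
        rw [Finset.prod_congr rfl hc, prod_single_marker v hv l N hl]
      · by_cases h2 : k' = k2
        · rw [if_neg h1, if_pos h2, one_mul]
          have hc : ∀ i ∈ Finset.range N,
              v ((if k' = k1 ∧ i = l then 1 else 0) + (if k' = k2 ∧ i = l' then 1 else 0))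
                ((if k' = k1 ∧ i < l then 1 else 0) + (if k' = k2 ∧ i < l' then 1 else 0))
              = v (if i = l' then 1 else 0) (if i < l' then 1 else 0) := by
            intro i _
            simp [h1, h2, hne.symm]
          rw [Finset.prod_congr rfl hc, prod_single_marker v hv l' N hl']
        · rw [if_neg h1, if_neg h2, mul_one]
          apply Finset.prod_eq_one
          intro i _
          rw [if_neg (by tauto), if_neg (by tauto), if_neg (by tauto), if_neg (by tauto)]
          exact hv
    rw [Finset.prod_congr rfl hinner, Finset.prod_mul_distrib,
      Finset.prod_ite_eq' (Finset.range N) k1 (fun _ => v 1 0 * v 0 1 ^ l),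
      Finset.prod_ite_eq' (Finset.range N) k2 (fun _ => v 1 0 * v 0 1 ^ l'),
      if_pos (Finset.mem_range.mpr hk1), if_pos (Finset.mem_range.mpr hk2)]

noncomputable def sHat {Ω : Type*} (U : ℕ → Ω → ℝ) (k : ℕ) (x : Ω) : ENNReal :=
  ENNReal.ofReal (U k x) * ∏ i ∈ Finset.range k, ENNReal.ofReal (1 - U i x)

noncomputable def iHat {Ω : Type*} {X : Type} (θ : ℕ → Ω → X) (A : Set X) (l : ℕ)
    (x : Ω) : ENNReal :=
  A.indicator (fun _ => (1:ENNReal)) (θ l x)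

noncomputable def gfun {X : Type} (A : Set X) (k1 k2 l l' : ℕ) :
    ∀ i, famCAM X i → ENNReal
  | .inl i => fun x : ℝ =>
      ENNReal.ofReal x ^ ((if i = k1 then 1 else 0) + (if i = k2 then 1 else 0))
      * ENNReal.ofReal (1 - x) ^ ((if i < k1 then 1 else 0) + (if i < k2 then 1 else 0))
  | .inr (.inl p) => fun x : ℝ => ENNReal.ofReal x ^
        ((if p.1 = k1 ∧ p.2 = l then 1 else 0) + (if p.1 = k2 ∧ p.2 = l' then 1 else 0))
      * ENNReal.ofReal (1 - x) ^
        ((if p.1 = k1 ∧ p.2 < l then 1 else 0) + (if p.1 = k2 ∧ p.2 < l' then 1 else 0))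
  | .inr (.inr _) => fun y => A.indicator (fun _ => (1:ENNReal)) y

noncomputable def camFinset (N l l' : ℕ) : Finset (ℕ ⊕ (ℕ × ℕ) ⊕ ℕ) :=
  (((Finset.range N).image Sum.inl)
    ∪ ((Finset.range N ×ˢ Finset.range N).image (fun p => Sum.inr (Sum.inl p))))
  ∪ (({l, l'} : Finset ℕ).image (fun j => Sum.inr (Sum.inr j)))

noncomputable def camFinsetW (N l l' : ℕ) : Finset (ℕ ⊕ (ℕ × ℕ) ⊕ ℕ) :=
  ((Finset.range N ×ˢ Finset.range N).image (fun p => Sum.inr (Sum.inl p)))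
  ∪ (({l, l'} : Finset ℕ).image (fun j => Sum.inr (Sum.inr j)))

lemma camFinset_prod (N l l' : ℕ) (h : (ℕ ⊕ (ℕ × ℕ) ⊕ ℕ) → ENNReal) :
    ∏ i ∈ camFinset N l l', h i
    = (∏ i ∈ Finset.range N, h (Sum.inl i))
      * (∏ p ∈ Finset.range N ×ˢ Finset.range N, h (Sum.inr (Sum.inl p)))
      * (∏ j ∈ ({l, l'} : Finset ℕ), h (Sum.inr (Sum.inr j))) := by
  have hd1 : Disjoint ((Finset.range N).image (Sum.inl : ℕ → ℕ ⊕ (ℕ × ℕ) ⊕ ℕ))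
      ((Finset.range N ×ˢ Finset.range N).image (fun p => Sum.inr (Sum.inl p))) := by
    simp only [Finset.disjoint_left, Finset.mem_image]
    rintro a ⟨i, _, rfl⟩ ⟨p, _, h⟩
    simp at h
  have hd2 : Disjoint (((Finset.range N).image (Sum.inl : ℕ → ℕ ⊕ (ℕ × ℕ) ⊕ ℕ))
      ∪ ((Finset.range N ×ˢ Finset.range N).image (fun p => Sum.inr (Sum.inl p))))
      (({l, l'} : Finset ℕ).image (fun j => Sum.inr (Sum.inr j))) := by
    simp only [Finset.disjoint_left, Finset.mem_union, Finset.mem_image]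
    rintro a (⟨i, _, rfl⟩ | ⟨p, _, rfl⟩) ⟨j, _, h⟩ <;> simp at h
  rw [camFinset, Finset.prod_union hd2, Finset.prod_union hd1,
    Finset.prod_image (fun a _ b _ hab => by simpa using hab),
    Finset.prod_image (fun a _ b _ hab => by simpa using hab),
    Finset.prod_image (fun a _ b _ hab => by simpa using hab)]

lemma camFinsetW_prod (N l l' : ℕ) (h : (ℕ ⊕ (ℕ × ℕ) ⊕ ℕ) → ENNReal) :
    ∏ i ∈ camFinsetW N l l', h i
    = (∏ p ∈ Finset.range N ×ˢ Finset.range N, h (Sum.inr (Sum.inl p)))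
      * (∏ j ∈ ({l, l'} : Finset ℕ), h (Sum.inr (Sum.inr j))) := by
  have hd1 : Disjoint ((Finset.range N ×ˢ Finset.range N).image
        (fun p => (Sum.inr (Sum.inl p) : ℕ ⊕ (ℕ × ℕ) ⊕ ℕ)))
      (({l, l'} : Finset ℕ).image (fun j => Sum.inr (Sum.inr j))) := by
    simp only [Finset.disjoint_left, Finset.mem_image]
    rintro a ⟨p, _, rfl⟩ ⟨j, _, h⟩
    simp at h
  rw [camFinsetW, Finset.prod_union hd1,
    Finset.prod_image (fun a _ b _ hab => by simpa using hab),
    Finset.prod_image (fun a _ b _ hab => by simpa using hab)]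

lemma theta_pointwise {Ω : Type*} {X : Type} (θ : ℕ → Ω → X) (A : Set X) (l l' : ℕ) (x : Ω) :
    ∏ j ∈ ({l, l'} : Finset ℕ), (A.indicator (fun _ => (1:ENNReal)) (θ j x))
    = iHat θ A l x * iHat θ A l' x := by
  rcases eq_or_ne l l' with he | hne
  · subst he
    have hset : ({l, l} : Finset ℕ) = {l} := by simp
    rw [hset, Finset.prod_singleton]
    by_cases h : θ l x ∈ A <;> simp [iHat, Set.indicator_of_mem, Set.indicator_of_notMem, h]
  · rw [Finset.prod_pair hne]
    rfl

lemma coord_moment {Ω : Type*} [MeasurableSpace Ω] (μ : MeasureTheory.Measure Ω) (γ : ℝ)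
    (U : Ω → ℝ) (hm : Measurable U) (hlaw : μ.map U = betaOne γ) (a b : ℕ) :
    ∫⁻ x, ENNReal.ofReal (U x) ^ a * ENNReal.ofReal (1 - U x) ^ b ∂μ = mom γ a b := by
  rw [mom, ← hlaw, MeasureTheory.lintegral_map (by fun_prop) hm]

lemma coord_theta {Ω : Type*} {X : Type} [MeasurableSpace Ω] [MeasurableSpace X]
    (μ : MeasureTheory.Measure Ω) (H : MeasureTheory.Measure X)
    (θl : Ω → X) (hm : Measurable θl) (hlaw : μ.map θl = H)
    (A : Set X) (hA : MeasurableSet A) :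
    ∫⁻ x, A.indicator (fun _ => (1:ENNReal)) (θl x) ∂μ = H A := by
  rw [← MeasureTheory.lintegral_map (measurable_const.indicator hA) hm, hlaw,
    MeasureTheory.lintegral_indicator hA]
  simp

lemma theta_moment {Ω : Type*} {X : Type} [MeasurableSpace Ω] [MeasurableSpace X]
    (μ : MeasureTheory.Measure Ω) (H : MeasureTheory.Measure X)
    (θ : ℕ → Ω → X) (hmθ : ∀ l, Measurable (θ l)) (hlawθ : ∀ l, μ.map (θ l) = H)
    (A : Set X) (hA : MeasurableSet A) (l l' : ℕ) :
    ∏ j ∈ ({l, l'} : Finset ℕ), (∫⁻ x, A.indicator (fun _ => (1:ENNReal)) (θ j x) ∂μ)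
    = if l = l' then H A else H A * H A := by
  rcases eq_or_ne l l' with he | hne
  · subst he
    have hset : ({l, l} : Finset ℕ) = {l} := by simp
    rw [hset, Finset.prod_singleton, if_pos rfl]
    exact coord_theta μ H (θ l) (hmθ l) (hlawθ l) A hA
  · rw [Finset.prod_pair hne, if_neg hne,
      coord_theta μ H (θ l) (hmθ l) (hlawθ l) A hA,
      coord_theta μ H (θ l') (hmθ l') (hlawθ l') A hA]

section TermEval
open MeasureTheory ProbabilityTheory

variable {Ω : Type*} {X : Type} [MeasurableSpace Ω] [MeasurableSpace X]
    (μ : Measure Ω) [IsProbabilityMeasure μ]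
    (H : Measure X) (α β : ℝ)
    (V : ℕ → Ω → ℝ) (W : ℕ → ℕ → Ω → ℝ) (θ : ℕ → Ω → X)

lemma measurable_famCAMF (hmV : ∀ k, Measurable (V k)) (hmW : ∀ k l, Measurable (W k l))
    (hmθ : ∀ l, Measurable (θ l)) :
    ∀ i, @Measurable Ω (famCAM X i) _ (famCAMMS X i) (famCAMF V W θ i) := by
  rintro (k | p | j)
  · exact hmV k
  · exact hmW p.1 p.2
  · exact hmθ j

lemma measurable_gfun (A : Set X) (hA : MeasurableSet A) (k1 k2 l l' : ℕ) :
    ∀ i, @Measurable (famCAM X i) ENNReal (famCAMMS X i) _ (gfun A k1 k2 l l' i) := by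
  rintro (i | p | j)
  · exact ((ENNReal.measurable_ofReal.comp measurable_id).pow_const _).mul
      ((ENNReal.measurable_ofReal.comp (measurable_const.sub measurable_id)).pow_const _)
  · exact ((ENNReal.measurable_ofReal.comp measurable_id).pow_const _).mul
      ((ENNReal.measurable_ofReal.comp (measurable_const.sub measurable_id)).pow_const _)
  · exact measurable_const.indicator hA

lemma term_eval (hα : 0 < α) (hβ : 0 < β)
    (hmV : ∀ k, Measurable (V k)) (hmW : ∀ k l, Measurable (W k l))
    (hmθ : ∀ l, Measurable (θ l))
    (hlawV : ∀ k, μ.map (V k) = betaOne α)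
    (hlawW : ∀ k l, μ.map (W k l) = betaOne β)
    (hlawθ : ∀ l, μ.map (θ l) = H)
    (hindep : iIndepFun (m := famCAMMS X) (famCAMF V W θ) μ)
    (A : Set X) (hA : MeasurableSet A) (k1 k2 l l' : ℕ) :
    ∫⁻ x, sHat V k1 x * sHat V k2 x
      * ((sHat (W k1) l x * iHat θ A l x) * (sHat (W k2) l' x * iHat θ A l' x)) ∂μ
    = Dv (mom α) k1 k2
      * (if k1 = k2 then Dv (mom β) l l'
         else (mom β 1 0 * mom β 0 1 ^ l) * (mom β 1 0 * mom β 0 1 ^ l'))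
      * (if l = l' then H A else H A * H A) := by
  set N := max (max k1 k2) (max l l') + 1 with hN
  have hk1 : k1 < N := by omega
  have hk2 : k2 < N := by omega
  have hl : l < N := by omega
  have hl' : l' < N := by omega
  have hpoint : ∀ x, sHat V k1 x * sHat V k2 x
      * ((sHat (W k1) l x * iHat θ A l x) * (sHat (W k2) l' x * iHat θ A l' x))
      = ∏ i ∈ camFinset N l l', gfun A k1 k2 l l' i (famCAMF V W θ i x) := by
    intro x
    rw [camFinset_prod]
    have f1 : ∏ i ∈ Finset.range N, gfun A k1 k2 l l' (Sum.inl i) (famCAMF V W θ (Sum.inl i) x)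
        = sHat V k1 x * sHat V k2 x := by
      have hc : ∀ i ∈ Finset.range N, gfun A k1 k2 l l' (Sum.inl i) (famCAMF V W θ (Sum.inl i) x)
          = ENNReal.ofReal (V i x) ^ ((if i = k1 then 1 else 0) + (if i = k2 then 1 else 0))
            * ENNReal.ofReal (1 - V i x)
              ^ ((if i < k1 then 1 else 0) + (if i < k2 then 1 else 0)) := fun i _ => rfl
      rw [Finset.prod_congr rfl hc, pointwise_pair (fun i => ENNReal.ofReal (V i x))
        (fun i => ENNReal.ofReal (1 - V i x)) k1 k2 N hk1 hk2]
      rfl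
    have f2 : ∏ p ∈ Finset.range N ×ˢ Finset.range N,
        gfun A k1 k2 l l' (Sum.inr (Sum.inl p)) (famCAMF V W θ (Sum.inr (Sum.inl p)) x)
        = sHat (W k1) l x * sHat (W k2) l' x := by
      have hc : ∀ p ∈ Finset.range N ×ˢ Finset.range N,
          gfun A k1 k2 l l' (Sum.inr (Sum.inl p)) (famCAMF V W θ (Sum.inr (Sum.inl p)) x)
          = (fun a b => ENNReal.ofReal (W a b x)) p.1 p.2 ^
              ((if p.1 = k1 ∧ p.2 = l then 1 else 0) + (if p.1 = k2 ∧ p.2 = l' then 1 else 0))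
            * (fun a b => ENNReal.ofReal (1 - W a b x)) p.1 p.2 ^
              ((if p.1 = k1 ∧ p.2 < l then 1 else 0)
                + (if p.1 = k2 ∧ p.2 < l' then 1 else 0)) := fun p _ => rfl
      rw [Finset.prod_congr rfl hc, pointwise_grid (fun a b => ENNReal.ofReal (W a b x))
        (fun a b => ENNReal.ofReal (1 - W a b x)) k1 k2 l l' N hk1 hk2 hl hl']
      rfl
    have f3 : ∏ j ∈ ({l, l'} : Finset ℕ),
        gfun A k1 k2 l l' (Sum.inr (Sum.inr j)) (famCAMF V W θ (Sum.inr (Sum.inr j)) x)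
        = iHat θ A l x * iHat θ A l' x := theta_pointwise θ A l l' x
    rw [f1, f2, f3]
    ring
  rw [lintegral_congr hpoint,
    lintegral_prod_of_iIndepFun hindep (measurable_famCAMF V W θ hmV hmW hmθ) _ _
      (measurable_gfun A hA k1 k2 l l'),
    camFinset_prod]
  have m1 : ∏ i ∈ Finset.range N,
      (∫⁻ x, gfun A k1 k2 l l' (Sum.inl i) (famCAMF V W θ (Sum.inl i) x) ∂μ)
      = Dv (mom α) k1 k2 := by
    have hc : ∀ i ∈ Finset.range N,
        (∫⁻ x, gfun A k1 k2 l l' (Sum.inl i) (famCAMF V W θ (Sum.inl i) x) ∂μ)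
        = mom α ((if i = k1 then 1 else 0) + (if i = k2 then 1 else 0))
            ((if i < k1 then 1 else 0) + (if i < k2 then 1 else 0)) := by
      intro i _
      exact coord_moment μ α (V i) (hmV i) (hlawV i) _ _
    rw [Finset.prod_congr rfl hc, prod_pair_sym (mom α) (mom00 α hα) k1 k2 N hk1 hk2]
  have m2 : ∏ p ∈ Finset.range N ×ˢ Finset.range N,
      (∫⁻ x, gfun A k1 k2 l l' (Sum.inr (Sum.inl p)) (famCAMF V W θ (Sum.inr (Sum.inl p)) x) ∂μ)
      = if k1 = k2 then Dv (mom β) l l'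
        else (mom β 1 0 * mom β 0 1 ^ l) * (mom β 1 0 * mom β 0 1 ^ l') := by
    have hc : ∀ p ∈ Finset.range N ×ˢ Finset.range N,
        (∫⁻ x, gfun A k1 k2 l l' (Sum.inr (Sum.inl p)) (famCAMF V W θ (Sum.inr (Sum.inl p)) x) ∂μ)
        = mom β
            ((if p.1 = k1 ∧ p.2 = l then 1 else 0) + (if p.1 = k2 ∧ p.2 = l' then 1 else 0))
            ((if p.1 = k1 ∧ p.2 < l then 1 else 0) + (if p.1 = k2 ∧ p.2 < l' then 1 else 0)) := by
      intro p _
      exact coord_moment μ β (W p.1 p.2) (hmW p.1 p.2) (hlawW p.1 p.2) _ _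
    rw [Finset.prod_congr rfl hc, moment_grid (mom β) (mom00 β hβ) k1 k2 l l' N hk1 hk2 hl hl']
  have m3 : ∏ j ∈ ({l, l'} : Finset ℕ),
      (∫⁻ x, gfun A k1 k2 l l' (Sum.inr (Sum.inr j)) (famCAMF V W θ (Sum.inr (Sum.inr j)) x) ∂μ)
      = if l = l' then H A else H A * H A := by
    have hc : ∀ j ∈ ({l, l'} : Finset ℕ),
        (∫⁻ x, gfun A k1 k2 l l' (Sum.inr (Sum.inr j)) (famCAMF V W θ (Sum.inr (Sum.inr j)) x) ∂μ)
        = ∫⁻ x, A.indicator (fun _ => (1:ENNReal)) (θ j x) ∂μ := fun j _ => rfl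
    rw [Finset.prod_congr rfl hc]
    exact theta_moment μ H θ hmθ hlawθ A hA l l'
  rw [m1, m2, m3]

lemma termW_eval (hβ : 0 < β)
    (hmV : ∀ k, Measurable (V k)) (hmW : ∀ k l, Measurable (W k l))
    (hmθ : ∀ l, Measurable (θ l))
    (hlawW : ∀ k l, μ.map (W k l) = betaOne β)
    (hlawθ : ∀ l, μ.map (θ l) = H)
    (hindep : iIndepFun (m := famCAMMS X) (famCAMF V W θ) μ)
    (A : Set X) (hA : MeasurableSet A) (l l' : ℕ) :
    ∫⁻ x, (sHat (W 0) l x * iHat θ A l x) * (sHat (W 0) l' x * iHat θ A l' x) ∂μ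
    = Dv (mom β) l l' * (if l = l' then H A else H A * H A) := by
  set N := max l l' + 1 with hN
  have hk0 : 0 < N := by omega
  have hl : l < N := by omega
  have hl' : l' < N := by omega
  have hpoint : ∀ x, (sHat (W 0) l x * iHat θ A l x) * (sHat (W 0) l' x * iHat θ A l' x)
      = ∏ i ∈ camFinsetW N l l', gfun A 0 0 l l' i (famCAMF V W θ i x) := by
    intro x
    rw [camFinsetW_prod]
    have f2 : ∏ p ∈ Finset.range N ×ˢ Finset.range N,
        gfun A 0 0 l l' (Sum.inr (Sum.inl p)) (famCAMF V W θ (Sum.inr (Sum.inl p)) x)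
        = sHat (W 0) l x * sHat (W 0) l' x := by
      have hc : ∀ p ∈ Finset.range N ×ˢ Finset.range N,
          gfun A 0 0 l l' (Sum.inr (Sum.inl p)) (famCAMF V W θ (Sum.inr (Sum.inl p)) x)
          = (fun a b => ENNReal.ofReal (W a b x)) p.1 p.2 ^
              ((if p.1 = 0 ∧ p.2 = l then 1 else 0) + (if p.1 = 0 ∧ p.2 = l' then 1 else 0))
            * (fun a b => ENNReal.ofReal (1 - W a b x)) p.1 p.2 ^
              ((if p.1 = 0 ∧ p.2 < l then 1 else 0)
                + (if p.1 = 0 ∧ p.2 < l' then 1 else 0)) := fun p _ => rfl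
      rw [Finset.prod_congr rfl hc, pointwise_grid (fun a b => ENNReal.ofReal (W a b x))
        (fun a b => ENNReal.ofReal (1 - W a b x)) 0 0 l l' N hk0 hk0 hl hl']
      rfl
    have f3 : ∏ j ∈ ({l, l'} : Finset ℕ),
        gfun A 0 0 l l' (Sum.inr (Sum.inr j)) (famCAMF V W θ (Sum.inr (Sum.inr j)) x)
        = iHat θ A l x * iHat θ A l' x := theta_pointwise θ A l l' x
    rw [f2, f3]
    ring
  rw [lintegral_congr hpoint,
    lintegral_prod_of_iIndepFun hindep (measurable_famCAMF V W θ hmV hmW hmθ) _ _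
      (measurable_gfun A hA 0 0 l l'),
    camFinsetW_prod]
  have m2 : ∏ p ∈ Finset.range N ×ˢ Finset.range N,
      (∫⁻ x, gfun A 0 0 l l' (Sum.inr (Sum.inl p)) (famCAMF V W θ (Sum.inr (Sum.inl p)) x) ∂μ)
      = Dv (mom β) l l' := by
    have hc : ∀ p ∈ Finset.range N ×ˢ Finset.range N,
        (∫⁻ x, gfun A 0 0 l l' (Sum.inr (Sum.inl p)) (famCAMF V W θ (Sum.inr (Sum.inl p)) x) ∂μ)
        = mom β
            ((if p.1 = 0 ∧ p.2 = l then 1 else 0) + (if p.1 = 0 ∧ p.2 = l' then 1 else 0))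
            ((if p.1 = 0 ∧ p.2 < l then 1 else 0) + (if p.1 = 0 ∧ p.2 < l' then 1 else 0)) := by
      intro p _
      exact coord_moment μ β (W p.1 p.2) (hmW p.1 p.2) (hlawW p.1 p.2) _ _
    rw [Finset.prod_congr rfl hc, moment_grid (mom β) (mom00 β hβ) 0 0 l l' N hk0 hk0 hl hl',
      if_pos rfl]
  have m3 : ∏ j ∈ ({l, l'} : Finset ℕ),
      (∫⁻ x, gfun A 0 0 l l' (Sum.inr (Sum.inr j)) (famCAMF V W θ (Sum.inr (Sum.inr j)) x) ∂μ)
      = if l = l' then H A else H A * H A := by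
    have hc : ∀ j ∈ ({l, l'} : Finset ℕ),
        (∫⁻ x, gfun A 0 0 l l' (Sum.inr (Sum.inr j)) (famCAMF V W θ (Sum.inr (Sum.inr j)) x) ∂μ)
        = ∫⁻ x, A.indicator (fun _ => (1:ENNReal)) (θ j x) ∂μ := fun j _ => rfl
    rw [Finset.prod_congr rfl hc]
    exact theta_moment μ H θ hmθ hlawθ A hA l l'
  rw [m2, m3]

end TermEval

lemma sum_Dv_ite (v : ℕ → ℕ → ENNReal) (c c' : ENNReal) :
    (∑' (k1 : ℕ) (k2 : ℕ), Dv v k1 k2 * (if k1 = k2 then c else c'))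
    = v 2 0 * (1 - v 0 2)⁻¹ * c
      + (2 * (v 1 1 * v 1 0) * ((1 - v 0 2)⁻¹ * (1 - v 0 1)⁻¹)) * c' := by
  have hc : ∀ k1 k2 : ℕ, Dv v k1 k2 * (if k1 = k2 then c else c')
      = if k1 = k2 then v 2 0 * v 0 2 ^ k1 * c
        else (v 1 1 * v 1 0) * v 0 2 ^ (min k1 k2) * v 0 1 ^ (max k1 k2 - min k1 k2 - 1) * c' := by
    intro k1 k2
    rw [Dv]
    split_ifs with h
    · ring
    · ring
  calc (∑' (k1 : ℕ) (k2 : ℕ), Dv v k1 k2 * (if k1 = k2 then c else c'))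
      = ∑' (k1 : ℕ) (k2 : ℕ), (if k1 = k2 then v 2 0 * v 0 2 ^ k1 * c
        else (v 1 1 * v 1 0) * v 0 2 ^ (min k1 k2) * v 0 1 ^ (max k1 k2 - min k1 k2 - 1) * c') :=
        tsum_congr (fun k1 => tsum_congr (fun k2 => hc k1 k2))
    _ = _ := master_tsum (v 2 0) (v 0 2) (v 1 1 * v 1 0) (v 0 1) c c'

lemma cross_shape (v10 v01 : ENNReal) (l l' : ℕ) (h : l ≠ l') :
    (v10 * v01 ^ l) * (v10 * v01 ^ l')
    = (v10 * v10 * v01) * (v01 ^ 2) ^ (min l l') * v01 ^ (max l l' - min l l' - 1) := by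
  have e1 : (v10 * v01 ^ l) * (v10 * v01 ^ l') = (v10 * v10) * v01 ^ (l + l') := by
    rw [pow_add]
    ring
  have e2 : (v10 * v10 * v01) * (v01 ^ 2) ^ (min l l') * v01 ^ (max l l' - min l l' - 1)
      = (v10 * v10) * v01 ^ (2 * min l l' + (max l l' - min l l' - 1) + 1) := by
    rw [← pow_mul, pow_add, pow_add, pow_one]
    ring
  rw [e1, e2]
  congr 2
  omega

lemma sum_cross_ite (v10 v01 : ENNReal) (c c' : ENNReal) :
    (∑' (l : ℕ) (l' : ℕ), ((v10 * v01 ^ l) * (v10 * v01 ^ l')) * (if l = l' then c else c'))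
    = (v10 * v10) * (1 - v01 ^ 2)⁻¹ * c
      + (2 * (v10 * v10 * v01) * ((1 - v01 ^ 2)⁻¹ * (1 - v01)⁻¹)) * c' := by
  have hc : ∀ l l' : ℕ, ((v10 * v01 ^ l) * (v10 * v01 ^ l')) * (if l = l' then c else c')
      = if l = l' then (v10 * v10) * (v01 ^ 2) ^ l * c
        else (v10 * v10 * v01) * (v01 ^ 2) ^ (min l l')
          * v01 ^ (max l l' - min l l' - 1) * c' := by
    intro l l'
    split_ifs with h
    · subst h
      have e : (v01 ^ 2) ^ l = v01 ^ l * v01 ^ l := by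
        rw [← pow_add, ← pow_mul]
        congr 1
        omega
      rw [e]
      ring
    · rw [cross_shape v10 v01 l l' h]
  calc (∑' (l : ℕ) (l' : ℕ), ((v10 * v01 ^ l) * (v10 * v01 ^ l')) * (if l = l' then c else c'))
      = ∑' (l : ℕ) (l' : ℕ), (if l = l' then (v10 * v10) * (v01 ^ 2) ^ l * c
        else (v10 * v10 * v01) * (v01 ^ 2) ^ (min l l')
          * v01 ^ (max l l' - min l l' - 1) * c') :=
        tsum_congr (fun l => tsum_congr (fun l' => hc l l'))
    _ = _ := master_tsum (v10 * v10) (v01 ^ 2) (v10 * v10 * v01) v01 c c'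

noncomputable def EvarE (β : ℝ) (P : ENNReal) : ENNReal :=
  mom β 2 0 * (1 - mom β 0 2)⁻¹ * P
    + (2 * (mom β 1 1 * mom β 1 0) * ((1 - mom β 0 2)⁻¹ * (1 - mom β 0 1)⁻¹)) * (P * P)

noncomputable def EcrossE (β : ℝ) (P : ENNReal) : ENNReal :=
  (mom β 1 0 * mom β 1 0) * (1 - mom β 0 1 ^ 2)⁻¹ * P
    + (2 * (mom β 1 0 * mom β 1 0 * mom β 0 1) * ((1 - mom β 0 1 ^ 2)⁻¹ * (1 - mom β 0 1)⁻¹))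
      * (P * P)

noncomputable def NumE (α β : ℝ) (P : ENNReal) : ENNReal :=
  mom α 2 0 * (1 - mom α 0 2)⁻¹ * EvarE β P
    + (2 * (mom α 1 1 * mom α 1 0) * ((1 - mom α 0 2)⁻¹ * (1 - mom α 0 1)⁻¹)) * EcrossE β P

section MainLint
open MeasureTheory ProbabilityTheory

variable {Ω : Type*} {X : Type} [MeasurableSpace Ω] [MeasurableSpace X]
    (μ : Measure Ω) [IsProbabilityMeasure μ]
    (H : Measure X) (α β : ℝ)
    (V : ℕ → Ω → ℝ) (W : ℕ → ℕ → Ω → ℝ) (θ : ℕ → Ω → X)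

lemma measurable_sHat (U : ℕ → Ω → ℝ) (hm : ∀ k, Measurable (U k)) (k : ℕ) :
    Measurable (fun x => sHat U k x) :=
  (ENNReal.measurable_ofReal.comp (hm k)).mul
    (Finset.measurable_prod _ (fun i _ =>
      ENNReal.measurable_ofReal.comp (measurable_const.sub (hm i))))

lemma measurable_iHat (A : Set X) (hA : MeasurableSet A) (hmθ : ∀ l, Measurable (θ l)) (l : ℕ) :
    Measurable (fun x => iHat θ A l x) :=
  (measurable_const.indicator hA).comp (hmθ l)

lemma lint_S0_sq (hβ : 0 < β)
    (hmV : ∀ k, Measurable (V k)) (hmW : ∀ k l, Measurable (W k l))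
    (hmθ : ∀ l, Measurable (θ l))
    (hlawW : ∀ k l, μ.map (W k l) = betaOne β)
    (hlawθ : ∀ l, μ.map (θ l) = H)
    (hindep : iIndepFun (m := famCAMMS X) (famCAMF V W θ) μ)
    (A : Set X) (hA : MeasurableSet A) :
    ∫⁻ x, (∑' l : ℕ, sHat (W 0) l x * iHat θ A l x) ^ 2 ∂μ = EvarE β (H A) := by
  set f : ℕ → Ω → ENNReal := fun l x => sHat (W 0) l x * iHat θ A l x with hf
  have hmf : ∀ l, Measurable (f l) := fun l =>
    (measurable_sHat (W 0) (hmW 0) l).mul (measurable_iHat θ A hA hmθ l)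
  have hsq : ∀ x, (∑' l : ℕ, f l x) ^ 2 = ∑' (l : ℕ) (l' : ℕ), f l x * f l' x := by
    intro x
    rw [sq, ← ENNReal.tsum_mul_right]
    exact tsum_congr (fun l => (ENNReal.tsum_mul_left).symm)
  calc ∫⁻ x, (∑' l : ℕ, f l x) ^ 2 ∂μ
      = ∫⁻ x, ∑' (l : ℕ) (l' : ℕ), f l x * f l' x ∂μ := lintegral_congr hsq
    _ = ∑' (l : ℕ), ∫⁻ x, ∑' (l' : ℕ), f l x * f l' x ∂μ :=
        lintegral_tsum (fun l => (Measurable.ennreal_tsum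
          (fun l' => (hmf l).mul (hmf l'))).aemeasurable)
    _ = ∑' (l : ℕ) (l' : ℕ), ∫⁻ x, f l x * f l' x ∂μ :=
        tsum_congr (fun l => lintegral_tsum (fun l' => ((hmf l).mul (hmf l')).aemeasurable))
    _ = ∑' (l : ℕ) (l' : ℕ), Dv (mom β) l l' * (if l = l' then H A else H A * H A) :=
        tsum_congr (fun l => tsum_congr (fun l' =>
          termW_eval μ H β V W θ hβ hmV hmW hmθ hlawW hlawθ hindep A hA l l'))
    _ = EvarE β (H A) := by
        rw [EvarE]
        exact sum_Dv_ite (mom β) (H A) (H A * H A)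

lemma lint_T_sq (hα : 0 < α) (hβ : 0 < β)
    (hmV : ∀ k, Measurable (V k)) (hmW : ∀ k l, Measurable (W k l))
    (hmθ : ∀ l, Measurable (θ l))
    (hlawV : ∀ k, μ.map (V k) = betaOne α)
    (hlawW : ∀ k l, μ.map (W k l) = betaOne β)
    (hlawθ : ∀ l, μ.map (θ l) = H)
    (hindep : iIndepFun (m := famCAMMS X) (famCAMF V W θ) μ)
    (A : Set X) (hA : MeasurableSet A) :
    ∫⁻ x, (∑' k : ℕ, sHat V k x * (∑' l : ℕ, sHat (W k) l x * iHat θ A l x)) ^ 2 ∂μ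
    = NumE α β (H A) := by
  set S : ℕ → Ω → ENNReal := fun k x => ∑' l : ℕ, sHat (W k) l x * iHat θ A l x with hS
  set F : ℕ → Ω → ENNReal := fun k x => sHat V k x * S k x with hF
  have hmS : ∀ k, Measurable (S k) := fun k => Measurable.ennreal_tsum
    (fun l => (measurable_sHat (W k) (hmW k) l).mul (measurable_iHat θ A hA hmθ l))
  have hmF : ∀ k, Measurable (F k) := fun k => (measurable_sHat V hmV k).mul (hmS k)
  have hsq : ∀ x, (∑' k : ℕ, F k x) ^ 2 = ∑' (k1 : ℕ) (k2 : ℕ), F k1 x * F k2 x := by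
    intro x
    rw [sq, ← ENNReal.tsum_mul_right]
    exact tsum_congr (fun k => (ENNReal.tsum_mul_left).symm)
  have hterm : ∀ k1 k2 : ℕ, ∫⁻ x, F k1 x * F k2 x ∂μ
      = Dv (mom α) k1 k2 * (if k1 = k2 then EvarE β (H A) else EcrossE β (H A)) := by
    intro k1 k2
    have hexp : ∀ x, F k1 x * F k2 x
        = ∑' (l : ℕ) (l' : ℕ), sHat V k1 x * sHat V k2 x
            * ((sHat (W k1) l x * iHat θ A l x) * (sHat (W k2) l' x * iHat θ A l' x)) := by
      intro x
      have h2 : S k1 x * S k2 x = ∑' (l : ℕ) (l' : ℕ),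
          (sHat (W k1) l x * iHat θ A l x) * (sHat (W k2) l' x * iHat θ A l' x) := by
        show (∑' l : ℕ, sHat (W k1) l x * iHat θ A l x)
            * (∑' l : ℕ, sHat (W k2) l x * iHat θ A l x) = _
        rw [← ENNReal.tsum_mul_right]
        exact tsum_congr (fun l => (ENNReal.tsum_mul_left).symm)
      calc F k1 x * F k2 x
          = (sHat V k1 x * sHat V k2 x) * (S k1 x * S k2 x) := by
            show (sHat V k1 x * S k1 x) * (sHat V k2 x * S k2 x) = _
            ring
        _ = (sHat V k1 x * sHat V k2 x) * ∑' (l : ℕ) (l' : ℕ),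
              (sHat (W k1) l x * iHat θ A l x) * (sHat (W k2) l' x * iHat θ A l' x) := by
            rw [h2]
        _ = ∑' (l : ℕ), (sHat V k1 x * sHat V k2 x) * ∑' (l' : ℕ),
              (sHat (W k1) l x * iHat θ A l x) * (sHat (W k2) l' x * iHat θ A l' x) :=
            (ENNReal.tsum_mul_left).symm
        _ = ∑' (l : ℕ) (l' : ℕ), sHat V k1 x * sHat V k2 x
              * ((sHat (W k1) l x * iHat θ A l x) * (sHat (W k2) l' x * iHat θ A l' x)) :=
            tsum_congr (fun l => (ENNReal.tsum_mul_left).symm)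
    calc ∫⁻ x, F k1 x * F k2 x ∂μ
        = ∫⁻ x, ∑' (l : ℕ) (l' : ℕ), sHat V k1 x * sHat V k2 x
            * ((sHat (W k1) l x * iHat θ A l x) * (sHat (W k2) l' x * iHat θ A l' x)) ∂μ :=
          lintegral_congr hexp
      _ = ∑' (l : ℕ) (l' : ℕ), ∫⁻ x, sHat V k1 x * sHat V k2 x
            * ((sHat (W k1) l x * iHat θ A l x) * (sHat (W k2) l' x * iHat θ A l' x)) ∂μ := by
          refine (lintegral_tsum (fun l => (Measurable.ennreal_tsum (fun l' =>
            ((measurable_sHat V hmV k1).mul (measurable_sHat V hmV k2)).mul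
              (((measurable_sHat (W k1) (hmW k1) l).mul (measurable_iHat θ A hA hmθ l)).mul
                ((measurable_sHat (W k2) (hmW k2) l').mul
                  (measurable_iHat θ A hA hmθ l'))))).aemeasurable)).trans ?_
          exact tsum_congr (fun l => lintegral_tsum (fun l' =>
            (((measurable_sHat V hmV k1).mul (measurable_sHat V hmV k2)).mul
              (((measurable_sHat (W k1) (hmW k1) l).mul (measurable_iHat θ A hA hmθ l)).mul
                ((measurable_sHat (W k2) (hmW k2) l').mul
                  (measurable_iHat θ A hA hmθ l')))).aemeasurable))
      _ = ∑' (l : ℕ) (l' : ℕ), Dv (mom α) k1 k2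
            * (if k1 = k2 then Dv (mom β) l l'
               else (mom β 1 0 * mom β 0 1 ^ l) * (mom β 1 0 * mom β 0 1 ^ l'))
            * (if l = l' then H A else H A * H A) :=
          tsum_congr (fun l => tsum_congr (fun l' =>
            term_eval μ H α β V W θ hα hβ hmV hmW hmθ hlawV hlawW hlawθ hindep A hA k1 k2 l l'))
      _ = Dv (mom α) k1 k2 * (if k1 = k2 then EvarE β (H A) else EcrossE β (H A)) := by
          rcases eq_or_ne k1 k2 with he | hne
          · simp only [if_pos he]
            calc ∑' (l : ℕ) (l' : ℕ), Dv (mom α) k1 k2 * Dv (mom β) l l'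
                  * (if l = l' then H A else H A * H A)
                = ∑' (l : ℕ), Dv (mom α) k1 k2 * ∑' (l' : ℕ), Dv (mom β) l l'
                  * (if l = l' then H A else H A * H A) := by
                  refine tsum_congr (fun l => ?_)
                  rw [← ENNReal.tsum_mul_left]
                  exact tsum_congr (fun l' => by ring)
              _ = Dv (mom α) k1 k2 * ∑' (l : ℕ) (l' : ℕ), Dv (mom β) l l'
                  * (if l = l' then H A else H A * H A) := ENNReal.tsum_mul_left
              _ = _ := by rw [sum_Dv_ite (mom β) (H A) (H A * H A), EvarE]
          · simp only [if_neg hne]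
            calc ∑' (l : ℕ) (l' : ℕ), Dv (mom α) k1 k2
                  * ((mom β 1 0 * mom β 0 1 ^ l) * (mom β 1 0 * mom β 0 1 ^ l'))
                  * (if l = l' then H A else H A * H A)
                = ∑' (l : ℕ), Dv (mom α) k1 k2 * ∑' (l' : ℕ),
                  ((mom β 1 0 * mom β 0 1 ^ l) * (mom β 1 0 * mom β 0 1 ^ l'))
                  * (if l = l' then H A else H A * H A) := by
                  refine tsum_congr (fun l => ?_)
                  rw [← ENNReal.tsum_mul_left]
                  exact tsum_congr (fun l' => by ring)
              _ = Dv (mom α) k1 k2 * ∑' (l : ℕ) (l' : ℕ),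
                  ((mom β 1 0 * mom β 0 1 ^ l) * (mom β 1 0 * mom β 0 1 ^ l'))
                  * (if l = l' then H A else H A * H A) := ENNReal.tsum_mul_left
              _ = _ := by rw [sum_cross_ite (mom β 1 0) (mom β 0 1) (H A) (H A * H A), EcrossE]
  calc ∫⁻ x, (∑' k : ℕ, F k x) ^ 2 ∂μ
      = ∫⁻ x, ∑' (k1 : ℕ) (k2 : ℕ), F k1 x * F k2 x ∂μ := lintegral_congr hsq
    _ = ∑' (k1 : ℕ), ∫⁻ x, ∑' (k2 : ℕ), F k1 x * F k2 x ∂μ :=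
        lintegral_tsum (fun k1 => (Measurable.ennreal_tsum
          (fun k2 => (hmF k1).mul (hmF k2))).aemeasurable)
    _ = ∑' (k1 : ℕ) (k2 : ℕ), ∫⁻ x, F k1 x * F k2 x ∂μ :=
        tsum_congr (fun k1 => lintegral_tsum (fun k2 => ((hmF k1).mul (hmF k2)).aemeasurable))
    _ = ∑' (k1 : ℕ) (k2 : ℕ), Dv (mom α) k1 k2
        * (if k1 = k2 then EvarE β (H A) else EcrossE β (H A)) :=
        tsum_congr (fun k1 => tsum_congr (fun k2 => hterm k1 k2))
    _ = NumE α β (H A) := by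
        rw [NumE]
        exact sum_Dv_ite (mom α) (EvarE β (H A)) (EcrossE β (H A))

end MainLint

noncomputable def comboE (x1 y1 x2 y2 : ℝ) (C C' : ENNReal) : ENNReal :=
  ENNReal.ofReal x1 * (1 - ENNReal.ofReal y1)⁻¹ * C
    + (2 * ENNReal.ofReal x2 * ((1 - ENNReal.ofReal y1)⁻¹ * (1 - ENNReal.ofReal y2)⁻¹)) * C'

lemma one_sub_ofReal_eq (y : ℝ) (h0 : 0 ≤ y) :
    (1 : ENNReal) - ENNReal.ofReal y = ENNReal.ofReal (1 - y) := by
  rw [← ENNReal.ofReal_one, ← ENNReal.ofReal_sub 1 h0]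

lemma inv_one_sub_ofReal_ne_top (y : ℝ) (h0 : 0 ≤ y) (h1 : y < 1) :
    ((1 : ENNReal) - ENNReal.ofReal y)⁻¹ ≠ ⊤ := by
  rw [one_sub_ofReal_eq y h0, Ne, ENNReal.inv_eq_top, ENNReal.ofReal_eq_zero]
  linarith

lemma toReal_inv_one_sub_ofReal (y : ℝ) (h0 : 0 ≤ y) (h1 : y ≤ 1) :
    (((1 : ENNReal) - ENNReal.ofReal y)⁻¹).toReal = (1 - y)⁻¹ := by
  rw [one_sub_ofReal_eq y h0, ENNReal.toReal_inv, ENNReal.toReal_ofReal (by linarith)]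

lemma comboE_ne_top (x1 y1 x2 y2 : ℝ) (hy10 : 0 ≤ y1) (hy11 : y1 < 1)
    (hy20 : 0 ≤ y2) (hy21 : y2 < 1) (C C' : ENNReal) (hC : C ≠ ⊤) (hC' : C' ≠ ⊤) :
    comboE x1 y1 x2 y2 C C' ≠ ⊤ := by
  rw [comboE]
  apply ENNReal.add_ne_top.mpr
  constructor
  · exact ENNReal.mul_ne_top (ENNReal.mul_ne_top ENNReal.ofReal_ne_top
      (inv_one_sub_ofReal_ne_top y1 hy10 hy11)) hC
  · exact ENNReal.mul_ne_top (ENNReal.mul_ne_top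
      (ENNReal.mul_ne_top (by simp) ENNReal.ofReal_ne_top)
      (ENNReal.mul_ne_top (inv_one_sub_ofReal_ne_top y1 hy10 hy11)
        (inv_one_sub_ofReal_ne_top y2 hy20 hy21))) hC'

lemma comboE_toReal (x1 y1 x2 y2 : ℝ) (hx1 : 0 ≤ x1) (hy10 : 0 ≤ y1) (hy11 : y1 < 1)
    (hx2 : 0 ≤ x2) (hy20 : 0 ≤ y2) (hy21 : y2 < 1) (C C' : ENNReal)
    (hC : C ≠ ⊤) (hC' : C' ≠ ⊤) :
    (comboE x1 y1 x2 y2 C C').toReal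
    = x1 * (1 - y1)⁻¹ * C.toReal + (2 * x2 * ((1 - y1)⁻¹ * (1 - y2)⁻¹)) * C'.toReal := by
  rw [comboE, ENNReal.toReal_add
    (ENNReal.mul_ne_top (ENNReal.mul_ne_top ENNReal.ofReal_ne_top
      (inv_one_sub_ofReal_ne_top y1 hy10 hy11)) hC)
    (ENNReal.mul_ne_top (ENNReal.mul_ne_top
      (ENNReal.mul_ne_top (by simp) ENNReal.ofReal_ne_top)
      (ENNReal.mul_ne_top (inv_one_sub_ofReal_ne_top y1 hy10 hy11)
        (inv_one_sub_ofReal_ne_top y2 hy20 hy21))) hC')]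
  simp only [ENNReal.toReal_mul]
  rw [ENNReal.toReal_ofReal hx1, ENNReal.toReal_ofReal hx2,
    toReal_inv_one_sub_ofReal y1 hy10 hy11.le, toReal_inv_one_sub_ofReal y2 hy20 hy21.le]
  norm_num

lemma EvarE_eq (β : ℝ) (hβ : 0 < β) (P : ENNReal) :
    EvarE β P = comboE (2/((β+1)*(β+2))) (β/(β+2))
      ((β/((β+1)*(β+2))) * (1/(β+1))) (β/(β+1)) P (P * P) := by
  rw [EvarE, comboE, mom20 β hβ, mom02 β hβ, mom11 β hβ, mom10 β hβ, mom01 β hβ,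
    ← ENNReal.ofReal_mul (by positivity)]

lemma EcrossE_eq (β : ℝ) (hβ : 0 < β) (P : ENNReal) :
    EcrossE β P = comboE ((1/(β+1)) * (1/(β+1))) ((β/(β+1))^2)
      ((1/(β+1)) * (1/(β+1)) * (β/(β+1))) (β/(β+1)) P (P * P) := by
  rw [EcrossE, comboE, mom10 β hβ, mom01 β hβ,
    ← ENNReal.ofReal_mul (by positivity), ← ENNReal.ofReal_pow (by positivity),
    ← ENNReal.ofReal_mul (by positivity)]

lemma NumE_eq (α β : ℝ) (hα : 0 < α) (hβ : 0 < β) (P : ENNReal) :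
    NumE α β P = comboE (2/((α+1)*(α+2))) (α/(α+2))
      ((α/((α+1)*(α+2))) * (1/(α+1))) (α/(α+1)) (EvarE β P) (EcrossE β P) := by
  rw [NumE, comboE, mom20 α hα, mom02 α hα, mom11 α hα, mom10 α hα, mom01 α hα,
    ← ENNReal.ofReal_mul (by positivity)]

section Bridge
open MeasureTheory

lemma betaOne_ae_Icc {Ω : Type*} [MeasurableSpace Ω] (μ : Measure Ω) (γ : ℝ)
    (U : Ω → ℝ) (hm : Measurable U) (hlaw : μ.map U = betaOne γ) :
    ∀ᵐ x ∂μ, U x ∈ Set.Icc (0:ℝ) 1 := by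
  have h0 : (betaOne γ) (Set.Icc (0:ℝ) 1)ᶜ = 0 := by
    rw [betaOne, withDensity_apply _ measurableSet_Icc.compl,
      Measure.restrict_restrict measurableSet_Icc.compl, Set.compl_inter_self,
      Measure.restrict_empty, lintegral_zero_measure]
  have hμ : μ (U ⁻¹' (Set.Icc (0:ℝ) 1)ᶜ) = 0 := by
    rw [← Measure.map_apply hm measurableSet_Icc.compl, hlaw]
    exact h0
  exact ae_iff.mpr hμ

lemma stick_partial_sum (v : ℕ → ℝ) (n : ℕ) :
    ∑ k ∈ Finset.range n, (v k * ∏ i ∈ Finset.range k, (1 - v i))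
    = 1 - ∏ i ∈ Finset.range n, (1 - v i) := by
  induction n with
  | zero => simp
  | succ m ih =>
    rw [Finset.sum_range_succ, Finset.prod_range_succ, ih]
    ring

lemma stick_nn (v : ℕ → ℝ) (hv : ∀ i, 0 ≤ v i ∧ v i ≤ 1) (k : ℕ) :
    0 ≤ v k * ∏ i ∈ Finset.range k, (1 - v i) :=
  mul_nonneg (hv k).1 (Finset.prod_nonneg fun i _ => by linarith [(hv i).2])

lemma stick_sum_le (v : ℕ → ℝ) (hv : ∀ i, 0 ≤ v i ∧ v i ≤ 1) (n : ℕ) :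
    ∑ k ∈ Finset.range n, (v k * ∏ i ∈ Finset.range k, (1 - v i)) ≤ 1 := by
  rw [stick_partial_sum]
  have : (0:ℝ) ≤ ∏ i ∈ Finset.range n, (1 - v i) :=
    Finset.prod_nonneg fun i _ => by linarith [(hv i).2]
  linarith

lemma stick_summable (v : ℕ → ℝ) (hv : ∀ i, 0 ≤ v i ∧ v i ≤ 1) :
    Summable (fun k => v k * ∏ i ∈ Finset.range k, (1 - v i)) :=
  summable_of_sum_range_le (stick_nn v hv) (stick_sum_le v hv)

lemma stick_tsum_le (v : ℕ → ℝ) (hv : ∀ i, 0 ≤ v i ∧ v i ≤ 1) :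
    ∑' k : ℕ, (v k * ∏ i ∈ Finset.range k, (1 - v i)) ≤ 1 :=
  Summable.tsum_le_of_sum_range_le (stick_summable v hv) (stick_sum_le v hv)

lemma ofReal_stick (v : ℕ → ℝ) (hv : ∀ i, 0 ≤ v i ∧ v i ≤ 1) (k : ℕ) :
    ENNReal.ofReal (v k * ∏ i ∈ Finset.range k, (1 - v i))
    = ENNReal.ofReal (v k) * ∏ i ∈ Finset.range k, ENNReal.ofReal (1 - v i) := by
  rw [ENNReal.ofReal_mul (hv k).1,
    ENNReal.ofReal_prod_of_nonneg (fun i _ => by linarith [(hv i).2])]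

end Bridge

lemma tsum_double_sq {Ω : Type*} {X : Type} (V : ℕ → Ω → ℝ) (W : ℕ → ℕ → Ω → ℝ)
    (θ : ℕ → Ω → X) (A : Set X) (x : Ω) :
    (∑' (k1 : ℕ) (k2 : ℕ), stick V k1 x * stick V k2 x *
        ((∑' l : ℕ, A.indicator (fun _ => stick (W k1) l x) (θ l x)) *
          (∑' l : ℕ, A.indicator (fun _ => stick (W k2) l x) (θ l x))))
    = (∑' k : ℕ, stick V k x *
        (∑' l : ℕ, A.indicator (fun _ => stick (W k) l x) (θ l x))) ^ 2 := by
  have hstep : ∀ k1 : ℕ, (∑' k2 : ℕ, stick V k1 x * stick V k2 x *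
      ((∑' l : ℕ, A.indicator (fun _ => stick (W k1) l x) (θ l x)) *
        (∑' l : ℕ, A.indicator (fun _ => stick (W k2) l x) (θ l x))))
      = (stick V k1 x * (∑' l : ℕ, A.indicator (fun _ => stick (W k1) l x) (θ l x)))
        * (∑' k2 : ℕ, stick V k2 x *
            (∑' l : ℕ, A.indicator (fun _ => stick (W k2) l x) (θ l x))) := by
    intro k1
    rw [← tsum_mul_left]
    exact tsum_congr (fun k2 => by ring)
  rw [tsum_congr hstep, tsum_mul_right, sq]

lemma bridge_x {Ω : Type*} {X : Type} (V : ℕ → Ω → ℝ) (W : ℕ → ℕ → Ω → ℝ)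
    (θ : ℕ → Ω → X) (A : Set X) (x : Ω)
    (hx1 : ∀ k, V k x ∈ Set.Icc (0:ℝ) 1)
    (hx2 : ∀ q : ℕ × ℕ, W q.1 q.2 x ∈ Set.Icc (0:ℝ) 1) :
    (∀ k, ENNReal.ofReal (∑' l : ℕ, A.indicator (fun _ => stick (W k) l x) (θ l x))
        = ∑' l : ℕ, sHat (W k) l x * iHat θ A l x)
    ∧ (∀ k, 0 ≤ ∑' l : ℕ, A.indicator (fun _ => stick (W k) l x) (θ l x))
    ∧ (ENNReal.ofReal (∑' k : ℕ, stick V k x *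
          (∑' l : ℕ, A.indicator (fun _ => stick (W k) l x) (θ l x)))
        = ∑' k : ℕ, sHat V k x * (∑' l : ℕ, sHat (W k) l x * iHat θ A l x))
    ∧ (0 ≤ ∑' k : ℕ, stick V k x *
        (∑' l : ℕ, A.indicator (fun _ => stick (W k) l x) (θ l x))) := by
  have hvV : ∀ i, 0 ≤ V i x ∧ V i x ≤ 1 := fun i => ⟨(hx1 i).1, (hx1 i).2⟩
  have hvW : ∀ k i, 0 ≤ W k i x ∧ W k i x ≤ 1 := fun k i => ⟨(hx2 (k,i)).1, (hx2 (k,i)).2⟩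
  have hstV : Summable (fun k => stick V k x) := stick_summable (fun i => V i x) hvV
  have hstW : ∀ k, Summable (fun l => stick (W k) l x) :=
    fun k => stick_summable (fun i => W k i x) (hvW k)
  have hind_nn : ∀ k l, 0 ≤ A.indicator (fun _ => stick (W k) l x) (θ l x) := by
    intro k l
    by_cases h : θ l x ∈ A
    · rw [Set.indicator_of_mem h]
      exact stick_nn (fun i => W k i x) (hvW k) l
    · rw [Set.indicator_of_notMem h]
  have hind_le : ∀ k l, A.indicator (fun _ => stick (W k) l x) (θ l x) ≤ stick (W k) l x := by
    intro k l
    by_cases h : θ l x ∈ A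
    · rw [Set.indicator_of_mem h]
    · rw [Set.indicator_of_notMem h]
      exact stick_nn (fun i => W k i x) (hvW k) l
  have hSsum : ∀ k, Summable (fun l => A.indicator (fun _ => stick (W k) l x) (θ l x)) :=
    fun k => Summable.of_nonneg_of_le (hind_nn k) (hind_le k) (hstW k)
  have hS_nn : ∀ k, 0 ≤ ∑' l : ℕ, A.indicator (fun _ => stick (W k) l x) (θ l x) :=
    fun k => tsum_nonneg (hind_nn k)
  have hS_le : ∀ k, (∑' l : ℕ, A.indicator (fun _ => stick (W k) l x) (θ l x)) ≤ 1 :=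
    fun k => le_trans (Summable.tsum_le_tsum (hind_le k) (hSsum k) (hstW k))
      (stick_tsum_le (fun i => W k i x) (hvW k))
  have hofS : ∀ k, ENNReal.ofReal (∑' l : ℕ, A.indicator (fun _ => stick (W k) l x) (θ l x))
      = ∑' l : ℕ, sHat (W k) l x * iHat θ A l x := by
    intro k
    rw [ENNReal.ofReal_tsum_of_nonneg (hind_nn k) (hSsum k)]
    refine tsum_congr (fun l => ?_)
    by_cases h : θ l x ∈ A
    · rw [Set.indicator_of_mem h]
      have hi : iHat θ A l x = 1 := by rw [iHat, Set.indicator_of_mem h]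
      rw [hi, mul_one]
      exact ofReal_stick (fun i => W k i x) (hvW k) l
    · rw [Set.indicator_of_notMem h]
      have hi : iHat θ A l x = 0 := by rw [iHat, Set.indicator_of_notMem h]
      rw [hi, mul_zero, ENNReal.ofReal_zero]
  have hT_nn : ∀ k, 0 ≤ stick V k x *
      (∑' l : ℕ, A.indicator (fun _ => stick (W k) l x) (θ l x)) :=
    fun k => mul_nonneg (stick_nn (fun i => V i x) hvV k) (hS_nn k)
  have hT_le : ∀ k, stick V k x *
      (∑' l : ℕ, A.indicator (fun _ => stick (W k) l x) (θ l x)) ≤ stick V k x :=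
    fun k => mul_le_of_le_one_right (stick_nn (fun i => V i x) hvV k) (hS_le k)
  have hTsum : Summable (fun k => stick V k x *
      (∑' l : ℕ, A.indicator (fun _ => stick (W k) l x) (θ l x))) :=
    Summable.of_nonneg_of_le hT_nn hT_le hstV
  refine ⟨hofS, hS_nn, ?_, tsum_nonneg hT_nn⟩
  rw [ENNReal.ofReal_tsum_of_nonneg hT_nn hTsum]
  refine tsum_congr (fun k => ?_)
  have h1 : ENNReal.ofReal (stick V k x) = sHat V k x :=
    ofReal_stick (fun i => V i x) hvV k
  rw [ENNReal.ofReal_mul (show (0:ℝ) ≤ stick V k x from stick_nn (fun i => V i x) hvV k),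
    hofS k, h1]

end AUX

set_option maxHeartbeats 2000000 in
/-- correlation of the Common Atoms Model: with the same setup as the
covariance statement, for every measurable A with 0 < H(A) < 1, the ratio of the
covariance `C(A) = E[∑_{k1,k2} π_{k1} π_{k2} G*_{k1}(A) G*_{k2}(A)] − H(A)²` to the
variance `V(A) = E[G*_0(A)²] − H(A)²` equals `1 − (β/(2β+1))(α/(1+α))`,
independently of A. -/
theorem cam_correlation {Ω : Type*} {X : Type} [MeasurableSpace Ω] [MeasurableSpace X]
    [MeasurableSingletonClass X]
    (μ : Measure Ω) [IsProbabilityMeasure μ]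
    (H : Measure X) [IsProbabilityMeasure H] (hH : ∀ p : X, H {p} = 0)
    (α β : ℝ) (hα : 0 < α) (hβ : 0 < β)
    (V : ℕ → Ω → ℝ) (W : ℕ → ℕ → Ω → ℝ) (θ : ℕ → Ω → X)
    (hmV : ∀ k, Measurable (V k)) (hmW : ∀ k l, Measurable (W k l))
    (hmθ : ∀ l, Measurable (θ l))
    (hlawV : ∀ k, μ.map (V k) = betaOne α)
    (hlawW : ∀ k l, μ.map (W k l) = betaOne β)
    (hlawθ : ∀ l, μ.map (θ l) = H)
    (hindep : iIndepFun (m := famCAMMS X) (famCAMF V W θ) μ)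
    (A : Set X) (hA : MeasurableSet A) (hA0 : 0 < H A) (hA1 : H A < 1) :
    (∫ x, (∑' (k1 : ℕ) (k2 : ℕ), stick V k1 x * stick V k2 x *
          ((∑' l : ℕ, A.indicator (fun _ => stick (W k1) l x) (θ l x)) *
            (∑' l : ℕ, A.indicator (fun _ => stick (W k2) l x) (θ l x)))) ∂μ
        - (H A).toReal ^ 2) /
      (∫ x, (∑' l : ℕ, A.indicator (fun _ => stick (W 0) l x) (θ l x)) ^ 2 ∂μ
        - (H A).toReal ^ 2)
      = 1 - β / (2 * β + 1) * (α / (1 + α)) := by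
  classical
  have hPne : H A ≠ ⊤ := measure_ne_top H A
  set p : ℝ := (H A).toReal with hpdef
  have hHA : H A = ENNReal.ofReal p := (ENNReal.ofReal_toReal hPne).symm
  have hp0 : 0 < p := ENNReal.toReal_pos hA0.ne' hPne
  have hp1 : p < 1 := by
    have h := (ENNReal.toReal_lt_toReal hPne ENNReal.one_ne_top).mpr hA1
    simpa using h
  have hgood : ∀ᵐ x ∂μ, (∀ k, V k x ∈ Set.Icc (0:ℝ) 1)
      ∧ (∀ q : ℕ × ℕ, W q.1 q.2 x ∈ Set.Icc (0:ℝ) 1) := by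
    refine Filter.Eventually.and ?_ ?_
    · exact ae_all_iff.mpr (fun k => betaOne_ae_Icc μ α (V k) (hmV k) (hlawV k))
    · exact ae_all_iff.mpr (fun q => betaOne_ae_Icc μ β (W q.1 q.2) (hmW q.1 q.2) (hlawW q.1 q.2))
  have hmSH : ∀ k, Measurable (fun x => ∑' l : ℕ, sHat (W k) l x * iHat θ A l x) :=
    fun k => Measurable.ennreal_tsum
      (fun l => (measurable_sHat (W k) (hmW k) l).mul (measurable_iHat θ A hA hmθ l))
  have hmTH : Measurable (fun x =>
      ∑' k : ℕ, sHat V k x * (∑' l : ℕ, sHat (W k) l x * iHat θ A l x)) :=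
    Measurable.ennreal_tsum (fun k => (measurable_sHat V hmV k).mul (hmSH k))
  have hnum : (∫ x, (∑' (k1 : ℕ) (k2 : ℕ), stick V k1 x * stick V k2 x *
        ((∑' l : ℕ, A.indicator (fun _ => stick (W k1) l x) (θ l x)) *
          (∑' l : ℕ, A.indicator (fun _ => stick (W k2) l x) (θ l x)))) ∂μ)
      = (NumE α β (H A)).toReal := by
    calc (∫ x, (∑' (k1 : ℕ) (k2 : ℕ), stick V k1 x * stick V k2 x *
          ((∑' l : ℕ, A.indicator (fun _ => stick (W k1) l x) (θ l x)) *
            (∑' l : ℕ, A.indicator (fun _ => stick (W k2) l x) (θ l x)))) ∂μ)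
        = ∫ x, (∑' k : ℕ, stick V k x *
            (∑' l : ℕ, A.indicator (fun _ => stick (W k) l x) (θ l x))) ^ 2 ∂μ :=
          integral_congr_ae (ae_of_all _ (fun x => tsum_double_sq V W θ A x))
      _ = ∫ x, ((∑' k : ℕ, sHat V k x *
            (∑' l : ℕ, sHat (W k) l x * iHat θ A l x)) ^ 2).toReal ∂μ := by
          refine integral_congr_ae ?_
          filter_upwards [hgood] with x hx
          obtain ⟨hx1, hx2⟩ := hx
          obtain ⟨_, _, hofT, hTnn⟩ := bridge_x V W θ A x hx1 hx2
          rw [← hofT, ← ENNReal.ofReal_pow hTnn, ENNReal.toReal_ofReal (pow_nonneg hTnn 2)]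
      _ = (∫⁻ x, ENNReal.ofReal (((∑' k : ℕ, sHat V k x *
            (∑' l : ℕ, sHat (W k) l x * iHat θ A l x)) ^ 2).toReal) ∂μ).toReal :=
          integral_eq_lintegral_of_nonneg_ae (ae_of_all _ (fun x => ENNReal.toReal_nonneg))
            ((hmTH.pow_const 2).ennreal_toReal).aestronglyMeasurable
      _ = (∫⁻ x, (∑' k : ℕ, sHat V k x *
            (∑' l : ℕ, sHat (W k) l x * iHat θ A l x)) ^ 2 ∂μ).toReal := by
          congr 1
          refine lintegral_congr_ae ?_
          filter_upwards [hgood] with x hx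
          obtain ⟨hx1, hx2⟩ := hx
          obtain ⟨_, _, hofT, _⟩ := bridge_x V W θ A x hx1 hx2
          have hne : (∑' k : ℕ, sHat V k x *
              (∑' l : ℕ, sHat (W k) l x * iHat θ A l x)) ≠ ⊤ := by
            rw [← hofT]
            exact ENNReal.ofReal_ne_top
          rw [ENNReal.ofReal_toReal (ENNReal.pow_ne_top hne)]
      _ = (NumE α β (H A)).toReal := by
          rw [lint_T_sq μ H α β V W θ hα hβ hmV hmW hmθ hlawV hlawW hlawθ hindep A hA]
  have hden : (∫ x, (∑' l : ℕ, A.indicator (fun _ => stick (W 0) l x) (θ l x)) ^ 2 ∂μ)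
      = (EvarE β (H A)).toReal := by
    calc (∫ x, (∑' l : ℕ, A.indicator (fun _ => stick (W 0) l x) (θ l x)) ^ 2 ∂μ)
        = ∫ x, ((∑' l : ℕ, sHat (W 0) l x * iHat θ A l x) ^ 2).toReal ∂μ := by
          refine integral_congr_ae ?_
          filter_upwards [hgood] with x hx
          obtain ⟨hx1, hx2⟩ := hx
          obtain ⟨hofS, hS_nn, _, _⟩ := bridge_x V W θ A x hx1 hx2
          rw [← hofS 0, ← ENNReal.ofReal_pow (hS_nn 0), ENNReal.toReal_ofReal
            (pow_nonneg (hS_nn 0) 2)]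
      _ = (∫⁻ x, ENNReal.ofReal (((∑' l : ℕ, sHat (W 0) l x * iHat θ A l x) ^ 2).toReal)
            ∂μ).toReal :=
          integral_eq_lintegral_of_nonneg_ae (ae_of_all _ (fun x => ENNReal.toReal_nonneg))
            (((hmSH 0).pow_const 2).ennreal_toReal).aestronglyMeasurable
      _ = (∫⁻ x, (∑' l : ℕ, sHat (W 0) l x * iHat θ A l x) ^ 2 ∂μ).toReal := by
          congr 1
          refine lintegral_congr_ae ?_
          filter_upwards [hgood] with x hx
          obtain ⟨hx1, hx2⟩ := hx
          obtain ⟨hofS, _, _, _⟩ := bridge_x V W θ A x hx1 hx2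
          have hne : (∑' l : ℕ, sHat (W 0) l x * iHat θ A l x) ≠ ⊤ := by
            rw [← hofS 0]
            exact ENNReal.ofReal_ne_top
          rw [ENNReal.ofReal_toReal (ENNReal.pow_ne_top hne)]
      _ = (EvarE β (H A)).toReal := by
          rw [lint_S0_sq μ H β V W θ hβ hmV hmW hmθ hlawW hlawθ hindep A hA]
  rw [hnum, hden]
  have hy11 : β/(β+2) < 1 := by
    rw [div_lt_one (by linarith)]
    linarith
  have hy21 : β/(β+1) < 1 := by
    rw [div_lt_one (by linarith)]
    linarith
  have hy11' : (β/(β+1))^2 < 1 := by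
    have h0 : 0 ≤ β/(β+1) := by positivity
    nlinarith
  have hPPne : H A * H A ≠ ⊤ := ENNReal.mul_ne_top hPne hPne
  have hPtr : (H A * H A).toReal = p * p := by rw [ENNReal.toReal_mul]
  have hEvar : (EvarE β (H A)).toReal = p/(β+1) + β*(p*p)/(β+1) := by
    rw [EvarE_eq β hβ (H A), comboE_toReal _ _ _ _ (by positivity) (by positivity) hy11
      (by positivity) (by positivity) hy21 (H A) (H A * H A) hPne hPPne, hPtr]
    have hb1 : (β:ℝ)+1 ≠ 0 := by linarith
    have hb2 : (β:ℝ)+2 ≠ 0 := by linarith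
    have h1 : (1 : ℝ) - β/(β+2) = 2/(β+2) := by field_simp; ring
    have h2 : (1 : ℝ) - β/(β+1) = 1/(β+1) := by field_simp; ring
    rw [h1, h2]
    field_simp
    ring
  have hEcross : (EcrossE β (H A)).toReal = p/(2*β+1) + 2*β*(p*p)/(2*β+1) := by
    rw [EcrossE_eq β hβ (H A), comboE_toReal _ _ _ _ (by positivity) (by positivity) hy11'
      (by positivity) (by positivity) hy21 (H A) (H A * H A) hPne hPPne, hPtr]
    have hb1 : (β:ℝ)+1 ≠ 0 := by linarith
    have hb3 : 2*β+1 ≠ 0 := by linarith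
    have h1 : (1 : ℝ) - (β/(β+1))^2 = (2*β+1)/(β+1)^2 := by field_simp; ring
    have h2 : (1 : ℝ) - β/(β+1) = 1/(β+1) := by field_simp; ring
    rw [h1, h2]
    field_simp
    ring
  have hEvarNe : EvarE β (H A) ≠ ⊤ := by
    rw [EvarE_eq β hβ (H A)]
    exact comboE_ne_top _ _ _ _ (by positivity) hy11 (by positivity) hy21 _ _ hPne hPPne
  have hEcrossNe : EcrossE β (H A) ≠ ⊤ := by
    rw [EcrossE_eq β hβ (H A)]
    exact comboE_ne_top _ _ _ _ (by positivity) hy11' (by positivity) hy21 _ _ hPne hPPne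
  have hz11 : α/(α+2) < 1 := by
    rw [div_lt_one (by linarith)]
    linarith
  have hz21 : α/(α+1) < 1 := by
    rw [div_lt_one (by linarith)]
    linarith
  have hNum : (NumE α β (H A)).toReal
      = (1/(α+1)) * (p/(β+1) + β*(p*p)/(β+1))
        + (α/(α+1)) * (p/(2*β+1) + 2*β*(p*p)/(2*β+1)) := by
    rw [NumE_eq α β hα hβ (H A), comboE_toReal _ _ _ _ (by positivity) (by positivity) hz11
      (by positivity) (by positivity) hz21 (EvarE β (H A)) (EcrossE β (H A)) hEvarNe hEcrossNe,
      hEvar, hEcross]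
    have ha1 : (α:ℝ)+1 ≠ 0 := by linarith
    have ha2 : (α:ℝ)+2 ≠ 0 := by linarith
    have h1 : (1 : ℝ) - α/(α+2) = 2/(α+2) := by field_simp; ring
    have h2 : (1 : ℝ) - α/(α+1) = 1/(α+1) := by field_simp; ring
    rw [h1, h2]
    field_simp
  rw [hNum, hEvar]
  have hdenne : p/(β+1) + β*(p*p)/(β+1) - p^2 ≠ 0 := by
    have he : p/(β+1) + β*(p*p)/(β+1) - p^2 = p*(1-p)/(β+1) := by
      field_simp
      ring
    rw [he]
    exact ne_of_gt (div_pos (mul_pos hp0 (by linarith)) (by linarith))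
  rw [div_eq_iff hdenne]
  have ha1 : (α:ℝ)+1 ≠ 0 := by linarith
  have hb1 : (β:ℝ)+1 ≠ 0 := by linarith
  have hb3 : 2*β+1 ≠ 0 := by linarith
  field_simp
  ring
end
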